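/- arXiv:2001.09814 — 11 statements merged into one kernel-verified Lean document; each statement's English description precedes it below -/
import Mathlib

section
/- Let p be an odd prime and n an integer with gcd(n,p)=1. Then the cardinality of D_{n,p} equals (p-1)/4 + (1+(n/p))/2 if p ≡ 1 (mod 4), and equals (p-3)/4 + 1 if p ≡ 3 (mod 4), where (n/p) denotes the Legendre symbol of n modulo p. -/
/-- The modular hyperbola `H_{n,c} = {(x,y) : 0 ≤ x,y < c, x·y ≡ n (mod c)}`. -/
def Hyp (n : ℤ) (c : ℕ) : Set (ℤ × ℤ) :=
  {q : ℤ × ℤ | 0 ≤ q.1 ∧ q.1 < c ∧ 0 ≤ q.2 ∧ q.2 < c ∧ (c : ℤ) ∣ q.1 * q.2 - n}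

/-- The set of distances `D_{n,c} = {|x - y| : (x,y) ∈ H_{n,c}}`. -/
def Dists (n : ℤ) (c : ℕ) : Set ℤ :=
  (fun q : ℤ × ℤ => |q.1 - q.2|) '' Hyp n c

lemma mem_dists_iff {n : ℤ} {p : ℕ} {d : ℤ} :
    d ∈ Dists n p ↔ 0 ≤ d ∧ ∃ a : ℤ, d ≤ a ∧ a < p ∧ (p:ℤ) ∣ a * (a - d) - n := by
  constructor
  · rintro ⟨⟨x, y⟩, ⟨hx0, hxp, hy0, hyp, hdvd⟩, rfl⟩
    simp only at *
    refine ⟨abs_nonneg _, ?_⟩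
    rcases le_total y x with h | h
    · refine ⟨x, ?_⟩
      rw [abs_of_nonneg (by omega)]
      exact ⟨by omega, hxp, by rw [show x - (x - y) = y by ring]; exact hdvd⟩
    · refine ⟨y, ?_⟩
      rw [abs_of_nonpos (by omega)]
      refine ⟨by omega, hyp, ?_⟩
      rw [show y - -(x - y) = x by ring, mul_comm]
      exact hdvd
  · rintro ⟨hd0, a, hda, hap, hdvd⟩
    exact ⟨(a, a - d), ⟨by omega, hap, by omega, by omega, hdvd⟩, by simp [abs_of_nonneg hd0]⟩

section Aux
variable {p : ℕ} [Fact p.Prime] {n : ℤ}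

lemma dvd_iff_cast {a d : ℤ} :
    (p:ℤ) ∣ a * (a - d) - n ↔ (a : ZMod p) * ((a : ZMod p) - (d : ZMod p)) = (n : ZMod p) := by
  rw [← ZMod.intCast_zmod_eq_zero_iff_dvd]
  push_cast
  rw [sub_eq_zero]

lemma mem_dists_iff' {d : ℤ} :
    d ∈ Dists n p ↔ 0 ≤ d ∧ ∃ a : ℤ, d ≤ a ∧ a < p ∧
      (a : ZMod p) * ((a : ZMod p) - (d : ZMod p)) = (n : ZMod p) := by
  simp only [mem_dists_iff, dvd_iff_cast]

lemma dvd_bounded {P k : ℤ} (h1 : 0 < k) (h2 : k < P) (h : P ∣ k) : False := by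
  have := Int.le_of_dvd h1 h; omega

lemma exists_rep (x : ZMod p) : ∃ a : ℤ, 0 ≤ a ∧ a < p ∧ (a : ZMod p) = x :=
  ⟨x.val, Int.ofNat_nonneg _, by exact_mod_cast x.val_lt,
    by simp [ZMod.natCast_val, ZMod.cast_id]⟩

lemma root_cases {d : ℤ} (hd1 : 1 ≤ d) (hd2 : d ≤ (p:ℤ) - 1) (x : ZMod p)
    (hx : x * (x - (d : ZMod p)) = (n : ZMod p)) :
    d ∈ Dists n p ∨ ((p:ℤ) - d) ∈ Dists n p := by
  obtain ⟨a, ha0, hap, hax⟩ := exists_rep x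
  rcases le_or_gt d a with h | h
  · exact Or.inl (mem_dists_iff'.2 ⟨by omega, a, h, hap, by rw [hax]; exact hx⟩)
  · refine Or.inr (mem_dists_iff'.2 ⟨by omega, a + p - d, by omega, by omega, ?_⟩)
    have hcast : ((a + (p:ℤ) - d : ℤ) : ZMod p) = x - (d : ZMod p) := by
      push_cast
      simp [hax, ZMod.natCast_self]
    rw [hcast]
    have : ((((p:ℤ) - d) : ℤ) : ZMod p) = -(d : ZMod p) := by
      push_cast; simp [ZMod.natCast_self]
    rw [this]
    ring_nf
    ring_nf at hx
    linear_combination hx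

lemma not_both {d : ℤ} (hn0 : (n : ZMod p) ≠ 0) (hd1 : 1 ≤ d) (hd2 : d ≤ (p:ℤ) - 1)
    (h1 : d ∈ Dists n p) (h2 : ((p:ℤ) - d) ∈ Dists n p) : False := by
  obtain ⟨-, a, hda, hap, ha⟩ := mem_dists_iff'.1 h1
  obtain ⟨-, b, hdb, hbp, hb⟩ := mem_dists_iff'.1 h2
  have hne : a ≠ d := by
    rintro rfl
    apply hn0
    rw [← ha]; ring
  have hne' : b ≠ (p:ℤ) - d := by
    rintro rfl
    apply hn0
    rw [← hb]; ring
  have hbcast : (((p:ℤ) - d : ℤ) : ZMod p) = -(d : ZMod p) := by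
    push_cast; simp [ZMod.natCast_self]
  rw [hbcast] at hb
  -- roots: X := a, W := b + d both satisfy z (z - d) = n
  have hW : ((b : ZMod p) + d) * (((b : ZMod p) + d) - d) = (n : ZMod p) := by
    linear_combination hb
  have hfac : (((a : ZMod p)) - ((b : ZMod p) + d)) * (((a : ZMod p)) + ((b : ZMod p) + d) - d) = 0 := by
    linear_combination ha - hW
  rcases mul_eq_zero.1 hfac with h | h
  · -- a ≡ b + d mod p
    have : ((a - b - d : ℤ) : ZMod p) = 0 := by push_cast; linear_combination h
    have hdvd : (p:ℤ) ∣ a - b - d := (ZMod.intCast_zmod_eq_zero_iff_dvd _ _).1 this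
    exact dvd_bounded (by omega) (by omega) (dvd_neg.2 hdvd)
  · -- a + b ≡ 0 mod p
    have : ((a + b - p : ℤ) : ZMod p) = 0 := by
      push_cast; simp only [ZMod.natCast_self]; linear_combination h
    have hdvd : (p:ℤ) ∣ a + b - p := (ZMod.intCast_zmod_eq_zero_iff_dvd _ _).1 this
    exact dvd_bounded (by omega) (by omega) hdvd

lemma zmod_two_ne_zero (hodd : p ≠ 2) : (2 : ZMod p) ≠ 0 := by
  have hp := (Fact.out : p.Prime)
  intro h
  have : ((2 : ℕ) : ZMod p) = 0 := by exact_mod_cast h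
  rw [ZMod.natCast_eq_zero_iff] at this
  exact hodd (((Nat.prime_dvd_prime_iff_eq hp Nat.prime_two).1 this))

lemma root_iff_isSquare (hodd : p ≠ 2) (d : ℤ) :
    (∃ x : ZMod p, x * (x - (d : ZMod p)) = (n : ZMod p)) ↔
      IsSquare ((d : ZMod p)^2 + 4 * (n : ZMod p)) := by
  have h2 := zmod_two_ne_zero (p := p) hodd
  constructor
  · rintro ⟨x, hx⟩
    exact ⟨2 * x - d, by linear_combination -4 * hx⟩
  · rintro ⟨r, hr⟩
    have h4 : (4 : ZMod p) ≠ 0 := by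
      have h : (2 : ZMod p) * 2 ≠ 0 := mul_ne_zero h2 h2
      norm_num at h
      exact_mod_cast h
    set x : ZMod p := (r + (d : ZMod p)) * (2 : ZMod p)⁻¹ with hxdef
    have hx2 : x * 2 = r + (d : ZMod p) := by
      rw [hxdef, mul_assoc, inv_mul_cancel₀ h2, mul_one]
    refine ⟨x, ?_⟩
    apply mul_left_cancel₀ h4
    calc (4 : ZMod p) * (x * (x - (d : ZMod p)))
        = (x * 2) * (x * 2 - 2 * (d : ZMod p)) := by ring
      _ = (r + (d : ZMod p)) * ((r + (d : ZMod p)) - 2 * (d : ZMod p)) := by rw [hx2]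
      _ = 4 * (n : ZMod p) := by linear_combination -hr

lemma int_eq_of_cast_eq {a b : ℤ} (ha : 0 ≤ a) (hap : a < p) (hb : 0 ≤ b) (hbp : b < p)
    (h : (a : ZMod p) = (b : ZMod p)) : a = b := by
  have h0 : ((a - b : ℤ) : ZMod p) = 0 := by push_cast; rw [sub_eq_zero]; exact h
  have hdvd := (ZMod.intCast_zmod_eq_zero_iff_dvd _ _).1 h0
  by_contra hne
  rcases lt_or_gt_of_ne (sub_ne_zero.2 hne) with hlt | hgt
  · exact dvd_bounded (by omega) (by omega) ((dvd_neg).2 hdvd)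
  · exact dvd_bounded hgt (by omega) hdvd

lemma zero_mem_iff : (0 : ℤ) ∈ Dists n p ↔ IsSquare ((n : ZMod p)) := by
  rw [mem_dists_iff']
  constructor
  · rintro ⟨-, a, -, -, ha⟩
    exact ⟨(a : ZMod p), by rw [← ha]; push_cast; ring⟩
  · rintro ⟨r, hr⟩
    obtain ⟨a, ha0, hap, hax⟩ := exists_rep r
    exact ⟨le_refl 0, a, ha0, hap, by rw [hax, hr]; push_cast; ring⟩

open Finset in
lemma card_pairs (hodd : p ≠ 2) {c : ZMod p} (hc : c ≠ 0) :
    (univ.filter fun q : ZMod p × ZMod p => q.1^2 - q.2^2 = c).card = p - 1 := by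
  have h2 := zmod_two_ne_zero (p := p) hodd
  have h2' : (2 : ZMod p) * (2 : ZMod p)⁻¹ = 1 := mul_inv_cancel₀ h2
  have h2'' : (2 : ZMod p)⁻¹ * 2 = 1 := inv_mul_cancel₀ h2
  rw [show p - 1 = ((univ : Finset (ZMod p)).erase 0).card by
    rw [Finset.card_erase_of_mem (mem_univ _), card_univ, ZMod.card]]
  apply Finset.card_nbij' (i := fun q => q.1 + q.2)
    (j := fun u => ((u + c * u⁻¹) * (2:ZMod p)⁻¹, (u - c * u⁻¹) * (2:ZMod p)⁻¹))
  · intro q hq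
    simp only [mem_coe, mem_filter, mem_univ, true_and] at hq
    refine Finset.mem_erase.2 ⟨?_, mem_univ _⟩
    intro h0
    apply hc
    rw [← hq]
    have : q.2 = -q.1 := by linear_combination h0
    rw [this]; ring
  · intro u hu
    have hu0 : u ≠ 0 := (Finset.mem_erase.1 hu).1
    have huu : u * u⁻¹ = 1 := mul_inv_cancel₀ hu0
    simp only [mem_coe, mem_filter, mem_univ, true_and]
    linear_combination (4*c*(2:ZMod p)⁻¹^2) * huu + (c*(2*(2:ZMod p)⁻¹+1)) * h2'
  · intro q hq
    simp only [mem_coe, mem_filter, mem_univ, true_and] at hq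
    have hsum : q.1 + q.2 ≠ 0 := by
      intro h0
      apply hc
      rw [← hq]
      have : q.2 = -q.1 := by linear_combination h0
      rw [this]; ring
    have key : c * (q.1 + q.2)⁻¹ = q.1 - q.2 := by
      have hinv : (q.1 + q.2) * (q.1 + q.2)⁻¹ = 1 := mul_inv_cancel₀ hsum
      linear_combination (-(q.1 + q.2)⁻¹) * hq + (q.1 - q.2) * hinv
    refine Prod.ext ?_ ?_
    · show (q.1 + q.2 + c * (q.1 + q.2)⁻¹) * (2:ZMod p)⁻¹ = q.1
      rw [key]
      linear_combination q.1 * h2'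
    · show (q.1 + q.2 - c * (q.1 + q.2)⁻¹) * (2:ZMod p)⁻¹ = q.2
      rw [key]
      linear_combination q.2 * h2'
  · intro u hu
    show (u + c * u⁻¹) * (2:ZMod p)⁻¹ + (u - c * u⁻¹) * (2:ZMod p)⁻¹ = u
    linear_combination u * h2'

open Finset in
lemma sum_fibers {c : ZMod p} :
    ∑ t : ZMod p, (univ.filter fun s : ZMod p => s^2 = t^2 + c).card
      = (univ.filter fun q : ZMod p × ZMod p => q.1^2 - q.2^2 = c).card := by
  rw [Finset.card_eq_sum_card_fiberwise (f := Prod.snd) (t := univ) (fun x _ => mem_univ _)]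
  apply Finset.sum_congr rfl
  intro t _
  apply Finset.card_nbij' (i := fun s => (s, t)) (j := Prod.fst)
  · intro s hs
    simp only [mem_coe, mem_filter, mem_univ, true_and] at hs ⊢
    exact ⟨by linear_combination hs, trivial⟩
  · intro q hq
    simp only [mem_coe, mem_filter, mem_univ, true_and] at hq ⊢
    obtain ⟨h1, h2⟩ := hq
    subst h2
    linear_combination h1
  · intro s _
    rfl
  · intro q hq
    simp only [mem_coe, mem_filter, mem_univ, true_and] at hq
    exact Prod.ext rfl hq.2.symm

open Finset in
lemma card_sqrts (hodd : p ≠ 2) (b : ZMod p) :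
    2 * (if IsSquare b then 1 else 0)
      = (univ.filter fun s : ZMod p => s^2 = b).card + (if b = 0 then 1 else 0) := by
  have h2 := zmod_two_ne_zero (p := p) hodd
  by_cases hb0 : b = 0
  · subst hb0
    rw [if_pos ⟨0, by ring⟩, if_pos rfl]
    rw [show (univ.filter fun s : ZMod p => s^2 = 0) = {0} by
      ext s; simp [pow_eq_zero_iff]]
    simp
  · rw [if_neg hb0]
    by_cases hsq : IsSquare b
    · obtain ⟨r, hr⟩ := hsq
      have hr0 : r ≠ 0 := by rintro rfl; rw [mul_zero] at hr; exact hb0 hr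
      have hrne : r ≠ -r := by
        intro h
        apply hr0
        have : (2 : ZMod p) * r = 0 := by linear_combination h
        rcases mul_eq_zero.1 this with h' | h'
        · exact absurd h' h2
        · exact h'
      rw [if_pos ⟨r, hr⟩]
      rw [show (univ.filter fun s : ZMod p => s^2 = b) = {r, -r} by
        ext s
        simp only [mem_filter, mem_univ, true_and, mem_insert, mem_singleton]
        rw [hr, show r * r = r^2 by ring]
        exact sq_eq_sq_iff_eq_or_eq_neg]
      rw [Finset.card_pair hrne]
    · rw [if_neg hsq]
      rw [show (univ.filter fun s : ZMod p => s^2 = b) = ∅ by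
        ext s
        simp only [mem_filter, mem_univ, true_and, notMem_empty, iff_false]
        intro h
        exact hsq ⟨s, by rw [← h]; ring⟩]
      simp

open Finset in
lemma two_mul_N (hodd : p ≠ 2) {c : ZMod p} (hc : c ≠ 0) :
    2 * (univ.filter fun t : ZMod p => IsSquare (t^2 + c)).card
      = (p - 1) + (univ.filter fun s : ZMod p => s^2 = -c).card := by
  have key : ∑ t : ZMod p, 2 * (if IsSquare (t^2 + c) then 1 else 0)
      = ∑ t : ZMod p, ((univ.filter fun s : ZMod p => s^2 = t^2 + c).card
          + (if t^2 + c = 0 then 1 else 0)) := by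
    apply Finset.sum_congr rfl
    intro t _
    exact card_sqrts hodd _
  rw [Finset.sum_add_distrib, sum_fibers, card_pairs hodd hc] at key
  rw [← Finset.mul_sum, ← Finset.card_filter] at key
  have h2 : ∑ t : ZMod p, (if t^2 + c = 0 then 1 else 0)
      = (univ.filter fun s : ZMod p => s^2 = -c).card := by
    rw [Finset.card_filter]
    apply Finset.sum_congr rfl
    intro t _
    congr 1
    apply propext
    constructor
    · intro h; linear_combination h
    · intro h; linear_combination h
  rw [h2] at key
  exact key

lemma cast_val_int (t : ZMod p) : ((t.val : ℤ) : ZMod p) = t := by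
  simp [ZMod.natCast_val, ZMod.cast_id]

lemma isSquare_four_mul (hodd : p ≠ 2) {a : ZMod p} :
    IsSquare (4 * a) ↔ IsSquare a := by
  have h2 := zmod_two_ne_zero (p := p) hodd
  have h2' : (2:ZMod p) * (2:ZMod p)⁻¹ = 1 := mul_inv_cancel₀ h2
  constructor
  · rintro ⟨r, hr⟩
    refine ⟨r * (2:ZMod p)⁻¹, ?_⟩
    linear_combination ((2:ZMod p)⁻¹^2) * hr - (a*(1+2*(2:ZMod p)⁻¹)) * h2'
  · rintro ⟨r, hr⟩
    exact ⟨2*r, by linear_combination 4*hr⟩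

open Finset in
open scoped Classical in
lemma card_B0 :
    ((Finset.Icc (0:ℤ) ((p:ℤ)-1)).filter fun d : ℤ => IsSquare ((d:ZMod p)^2 + 4*(n:ZMod p))).card
      = (univ.filter fun t : ZMod p => IsSquare (t^2 + 4*(n:ZMod p))).card := by
  have hp1 : 1 ≤ (p:ℤ) := by exact_mod_cast (Fact.out : p.Prime).one_lt.le.trans' (by norm_num)
  have hi : ∀ d ∈ (Finset.Icc (0:ℤ) ((p:ℤ)-1)).filter
      (fun d : ℤ => IsSquare ((d:ZMod p)^2 + 4*(n:ZMod p))),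
      (d : ZMod p) ∈ univ.filter fun t : ZMod p => IsSquare (t^2 + 4*(n:ZMod p)) := by
    intro d hd
    exact Finset.mem_filter.2 ⟨mem_univ _, (Finset.mem_filter.1 hd).2⟩
  have hj : ∀ t ∈ univ.filter (fun t : ZMod p => IsSquare (t^2 + 4*(n:ZMod p))),
      (t.val : ℤ) ∈ (Finset.Icc (0:ℤ) ((p:ℤ)-1)).filter
        (fun d : ℤ => IsSquare ((d:ZMod p)^2 + 4*(n:ZMod p))) := by
    intro t ht
    have h := (Finset.mem_filter.1 ht).2
    have hv : (t.val : ℤ) < p := by exact_mod_cast t.val_lt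
    refine Finset.mem_filter.2 ⟨Finset.mem_Icc.2 ⟨Int.ofNat_nonneg _, by omega⟩, ?_⟩
    rw [cast_val_int]
    exact h
  have hleft : ∀ d ∈ (Finset.Icc (0:ℤ) ((p:ℤ)-1)).filter
      (fun d : ℤ => IsSquare ((d:ZMod p)^2 + 4*(n:ZMod p))), (((d : ZMod p).val : ℤ)) = d := by
    intro d hd
    have h := Finset.mem_Icc.1 (Finset.mem_filter.1 hd).1
    have hv : ((d : ZMod p).val : ℤ) < p := by exact_mod_cast (d : ZMod p).val_lt
    exact int_eq_of_cast_eq (Int.ofNat_nonneg _) hv h.1 (by omega) (cast_val_int _)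
  have hright : ∀ t ∈ univ.filter (fun t : ZMod p => IsSquare (t^2 + 4*(n:ZMod p))),
      (((t.val : ℤ) : ZMod p)) = t := fun t _ => cast_val_int t
  exact Finset.card_nbij' _ _ hi hj hleft hright

open Finset in
open scoped Classical in
lemma card_B (hodd : p ≠ 2) (hn0 : (n : ZMod p) ≠ 0) :
    ((Finset.Icc (1:ℤ) ((p:ℤ)-1)).filter
        (fun d : ℤ => IsSquare ((d:ZMod p)^2 + 4*(n:ZMod p)))).card
      = 2 * ((Finset.Icc (1:ℤ) ((p:ℤ)-1)).filter (fun d : ℤ => d ∈ Dists n p)).card := by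
  set A := (Finset.Icc (1:ℤ) ((p:ℤ)-1)).filter (fun d : ℤ => d ∈ Dists n p) with hA
  have hmemA : ∀ d : ℤ, d ∈ A ↔ (1 ≤ d ∧ d ≤ (p:ℤ)-1) ∧ d ∈ Dists n p := by
    intro d
    rw [hA, Finset.mem_filter, Finset.mem_Icc]
  have hroot : ∀ d : ℤ, d ∈ Dists n p →
      ∃ x : ZMod p, x * (x - (d : ZMod p)) = (n : ZMod p) := by
    intro d hd
    obtain ⟨-, a, -, -, ha⟩ := mem_dists_iff'.1 hd
    exact ⟨a, ha⟩
  have hBeq : (Finset.Icc (1:ℤ) ((p:ℤ)-1)).filter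
      (fun d : ℤ => IsSquare ((d:ZMod p)^2 + 4*(n:ZMod p)))
      = A ∪ A.image (fun d : ℤ => (p:ℤ) - d) := by
    ext d
    rw [Finset.mem_union, Finset.mem_filter, Finset.mem_Icc, Finset.mem_image]
    constructor
    · rintro ⟨⟨h1, h2⟩, hsq⟩
      obtain ⟨x, hx⟩ := (root_iff_isSquare hodd d).2 hsq
      rcases root_cases h1 h2 x hx with h | h
      · exact Or.inl ((hmemA d).2 ⟨⟨h1, h2⟩, h⟩)
      · exact Or.inr ⟨(p:ℤ) - d, (hmemA _).2 ⟨⟨by omega, by omega⟩, h⟩, by ring⟩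
    · rintro (hd | ⟨e, he, rfl⟩)
      · obtain ⟨⟨h1, h2⟩, hD⟩ := (hmemA d).1 hd
        exact ⟨⟨h1, h2⟩, (root_iff_isSquare hodd d).1 (hroot d hD)⟩
      · obtain ⟨⟨h1, h2⟩, hD⟩ := (hmemA e).1 he
        obtain ⟨x, hx⟩ := hroot e hD
        refine ⟨⟨by omega, by omega⟩, (root_iff_isSquare hodd _).1 ⟨-x, ?_⟩⟩
        have hc : (((p:ℤ) - e : ℤ) : ZMod p) = -(e : ZMod p) := by
          push_cast; simp [ZMod.natCast_self]
        rw [hc]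
        linear_combination hx
  have hdisj : Disjoint A (A.image (fun d : ℤ => (p:ℤ) - d)) := by
    rw [Finset.disjoint_left]
    intro d hd hd'
    obtain ⟨e, he, hde⟩ := Finset.mem_image.1 hd'
    obtain ⟨⟨h1', h2'⟩, hD'⟩ := (hmemA e).1 he
    obtain ⟨⟨h1, h2⟩, hD⟩ := (hmemA d).1 hd
    refine not_both hn0 h1 h2 hD ?_
    rw [show (p:ℤ) - d = e by omega]
    exact hD'
  rw [hBeq, Finset.card_union_of_disjoint hdisj,
    Finset.card_image_of_injective _ (sub_right_injective : Function.Injective (fun d : ℤ => (p:ℤ) - d))]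
  ring

open Finset in
open scoped Classical in
lemma master (hodd : p ≠ 2) (hn0 : (n : ZMod p) ≠ 0) :
    4 * (Dists n p).ncard
      = (p - 1) + (univ.filter fun s : ZMod p => s^2 = -(4*(n:ZMod p))).card
        + 2 * (if IsSquare ((n : ZMod p)) then 1 else 0) := by
  have hp2 : 2 ≤ p := (Fact.out : p.Prime).two_le
  have hp3 : 3 ≤ p := by omega
  have hpz : (3:ℤ) ≤ (p:ℤ) := by exact_mod_cast hp3
  have hicc : Finset.Icc (0:ℤ) ((p:ℤ)-1) = insert (0:ℤ) (Finset.Icc (1:ℤ) ((p:ℤ)-1)) := by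
    ext d; rw [Finset.mem_Icc, Finset.mem_insert, Finset.mem_Icc]; omega
  set i1 := (if IsSquare ((n : ZMod p)) then 1 else 0 : ℕ) with hi1
  have h1 : (Dists n p).ncard
      = ((Finset.Icc (0:ℤ) ((p:ℤ)-1)).filter (fun d : ℤ => d ∈ Dists n p)).card := by
    have : Dists n p
        = ↑((Finset.Icc (0:ℤ) ((p:ℤ)-1)).filter (fun d : ℤ => d ∈ Dists n p)) := by
      ext d
      simp only [Finset.coe_filter, Set.mem_setOf_eq, Finset.mem_Icc]
      constructor
      · intro hd
        obtain ⟨h0, a, hda, hap, -⟩ := mem_dists_iff'.1 hd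
        exact ⟨⟨h0, by omega⟩, hd⟩
      · exact fun h => h.2
    conv_lhs => rw [this]
    rw [Set.ncard_coe_finset]
  have h2 : ((Finset.Icc (0:ℤ) ((p:ℤ)-1)).filter (fun d : ℤ => d ∈ Dists n p)).card
      = i1 + ((Finset.Icc (1:ℤ) ((p:ℤ)-1)).filter (fun d : ℤ => d ∈ Dists n p)).card := by
    rw [hicc, Finset.filter_insert]
    by_cases h0 : (0:ℤ) ∈ Dists n p
    · have hnm : (0:ℤ) ∉ (Finset.Icc (1:ℤ) ((p:ℤ)-1)).filter (fun d : ℤ => d ∈ Dists n p) := by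
        intro hmem
        have := Finset.mem_Icc.1 (Finset.mem_filter.1 hmem).1
        omega
      rw [if_pos h0, hi1, if_pos (zero_mem_iff.1 h0), Finset.card_insert_of_notMem hnm]
      omega
    · rw [if_neg h0, hi1, if_neg (fun hsq => h0 (zero_mem_iff.2 hsq))]
      omega
  have hQ0 : IsSquare (((0:ℤ) : ZMod p)^2 + 4*(n:ZMod p)) ↔ IsSquare ((n : ZMod p)) := by
    rw [show (((0:ℤ) : ZMod p)^2 + 4*(n:ZMod p)) = 4*(n:ZMod p) by push_cast; ring]
    exact isSquare_four_mul hodd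
  have h3 : ((Finset.Icc (0:ℤ) ((p:ℤ)-1)).filter
        (fun d : ℤ => IsSquare ((d:ZMod p)^2 + 4*(n:ZMod p)))).card
      = i1 + ((Finset.Icc (1:ℤ) ((p:ℤ)-1)).filter
        (fun d : ℤ => IsSquare ((d:ZMod p)^2 + 4*(n:ZMod p)))).card := by
    rw [hicc, Finset.filter_insert]
    by_cases h0 : IsSquare (((0:ℤ) : ZMod p)^2 + 4*(n:ZMod p))
    · have hnm : (0:ℤ) ∉ (Finset.Icc (1:ℤ) ((p:ℤ)-1)).filter
          (fun d : ℤ => IsSquare ((d:ZMod p)^2 + 4*(n:ZMod p))) := by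
        intro hmem
        have := Finset.mem_Icc.1 (Finset.mem_filter.1 hmem).1
        omega
      rw [if_pos h0, hi1, if_pos (hQ0.1 h0), Finset.card_insert_of_notMem hnm]
      omega
    · rw [if_neg h0, hi1, if_neg (fun hsq => h0 (hQ0.2 hsq))]
      omega
  have h4 := card_B (n := n) hodd hn0
  have h5 := card_B0 (p := p) (n := n)
  have hfour : (4 : ZMod p) ≠ 0 := by
    have h := mul_ne_zero (zmod_two_ne_zero (p := p) hodd) (zmod_two_ne_zero (p := p) hodd)
    norm_num at h
    exact_mod_cast h
  have h6 := two_mul_N (p := p) hodd (mul_ne_zero hfour hn0)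
  omega

end Aux

open Finset in
theorem stmt_0 (p : ℕ) [Fact p.Prime] (hodd : p ≠ 2) (n : ℤ)
    (hn : Int.gcd n p = 1) :
    (p % 4 = 1 →
      ((Dists n p).ncard : ℤ) = ((p : ℤ) - 1) / 4 + (1 + legendreSym p n) / 2) ∧
    (p % 4 = 3 →
      ((Dists n p).ncard : ℤ) = ((p : ℤ) - 3) / 4 + 1) := by
  classical
  have hp2 : 2 ≤ p := (Fact.out : p.Prime).two_le
  have hn0 : (n : ZMod p) ≠ 0 := by
    intro h
    have hdvd := (ZMod.intCast_zmod_eq_zero_iff_dvd n p).1 h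
    have h1 : (p:ℤ) ∣ Int.gcd n p := Int.dvd_coe_gcd hdvd dvd_rfl
    rw [hn] at h1
    have := Int.le_of_dvd one_pos h1
    omega
  have hchar : ringChar (ZMod p) ≠ 2 := by rw [ZMod.ringChar_zmod_n]; exact hodd
  have hM : (((univ.filter fun s : ZMod p => s^2 = -(4*(n:ZMod p))).card : ℤ))
      = quadraticChar (ZMod p) (-(4*(n:ZMod p))) + 1 := by
    have h := quadraticChar_card_sqrts hchar (-(4*(n:ZMod p)))
    rw [← h]
    congr 1
    congr 1
    ext s
    simp [Set.mem_toFinset]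
  have hsplit : quadraticChar (ZMod p) (-(4*(n:ZMod p)))
      = quadraticChar (ZMod p) (-1 : ZMod p) * legendreSym p n := by
    rw [show -(4*(n:ZMod p)) = (-1) * ((2:ZMod p)^2 * (n:ZMod p)) by ring, map_mul, map_mul,
      quadraticChar_sq_one' (zmod_two_ne_zero hodd)]
    rw [legendreSym]
    ring
  have hmaster := master hodd hn0
  constructor
  · intro hp4
    have hneg1 : IsSquare (-1 : ZMod p) := ZMod.exists_sq_eq_neg_one_iff.2 (by omega)
    have hχ1 : quadraticChar (ZMod p) (-1 : ZMod p) = 1 :=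
      (quadraticChar_one_iff_isSquare (neg_ne_zero.2 one_ne_zero)).2 hneg1
    rcases legendreSym.eq_one_or_neg_one p hn0 with hε | hε
    · have hsqn : IsSquare ((n : ZMod p)) := (legendreSym.eq_one_iff p hn0).1 hε
      have hMval : (univ.filter fun s : ZMod p => s^2 = -(4*(n:ZMod p))).card = 2 := by
        have : (((univ.filter fun s : ZMod p => s^2 = -(4*(n:ZMod p))).card : ℤ)) = 2 := by
          rw [hM, hsplit, hχ1, hε]; norm_num
        exact_mod_cast this
      rw [hMval, if_pos hsqn] at hmaster
      rw [hε]
      omega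
    · have hsqn : ¬ IsSquare ((n : ZMod p)) := by
        intro h
        rw [(legendreSym.eq_one_iff p hn0).2 h] at hε
        norm_num at hε
      have hMval : (univ.filter fun s : ZMod p => s^2 = -(4*(n:ZMod p))).card = 0 := by
        have : (((univ.filter fun s : ZMod p => s^2 = -(4*(n:ZMod p))).card : ℤ)) = 0 := by
          rw [hM, hsplit, hχ1, hε]; norm_num
        exact_mod_cast this
      rw [hMval, if_neg hsqn] at hmaster
      rw [hε]
      omega
  · intro hp4
    have hneg1 : ¬ IsSquare (-1 : ZMod p) := fun h =>
      absurd hp4 (ZMod.exists_sq_eq_neg_one_iff.1 h)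
    have hχ1 : quadraticChar (ZMod p) (-1 : ZMod p) = -1 :=
      quadraticChar_neg_one_iff_not_isSquare.2 hneg1
    rcases legendreSym.eq_one_or_neg_one p hn0 with hε | hε
    · have hsqn : IsSquare ((n : ZMod p)) := (legendreSym.eq_one_iff p hn0).1 hε
      have hMval : (univ.filter fun s : ZMod p => s^2 = -(4*(n:ZMod p))).card = 0 := by
        have : (((univ.filter fun s : ZMod p => s^2 = -(4*(n:ZMod p))).card : ℤ)) = 0 := by
          rw [hM, hsplit, hχ1, hε]; norm_num
        exact_mod_cast this
      rw [hMval, if_pos hsqn] at hmaster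
      omega
    · have hsqn : ¬ IsSquare ((n : ZMod p)) := by
        intro h
        rw [(legendreSym.eq_one_iff p hn0).2 h] at hε
        norm_num at hε
      have hMval : (univ.filter fun s : ZMod p => s^2 = -(4*(n:ZMod p))).card = 2 := by
        have : (((univ.filter fun s : ZMod p => s^2 = -(4*(n:ZMod p))).card : ℤ)) = 2 := by
          rw [hM, hsplit, hχ1, hε]; norm_num
        exact_mod_cast this
      rw [hMval, if_neg hsqn] at hmaster
      omega
end

section
/- Let p be an odd prime and n an integer with gcd(n,p)=1. Let R̄₁ = {(x,y) ∈ H_{n,p} : y ≤ min(x, p−x)}. Then the map ψ̄ : R̄₁ → D_{n,p} defined by ψ̄(x,y) = |x − y| is a bijection. -/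
lemma hyp_pos {p : ℕ} [Fact p.Prime] {n : ℤ} (hn : Int.gcd n p = 1)
    {x y : ℤ} (hx : 0 ≤ x) (hy : 0 ≤ y) (hd : (p : ℤ) ∣ x * y - n) :
    0 < x ∧ 0 < y := by
  have h2 : 2 ≤ (p : ℤ) := by exact_mod_cast (Fact.out : p.Prime).two_le
  have hco : IsCoprime n (p : ℤ) := Int.isCoprime_iff_gcd_eq_one.mpr hn
  have key : ∀ z w : ℤ, (p : ℤ) ∣ z * w - n → z ≠ 0 := by
    intro z w hzw hz0
    have hpn : (p : ℤ) ∣ n := by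
      have : (p : ℤ) ∣ -(z * w - n) := dvd_neg.mpr hzw
      simpa [hz0] using this
    have : IsUnit (p : ℤ) := hco.isUnit_of_dvd' hpn dvd_rfl
    rcases Int.isUnit_iff.mp this with h | h <;> omega
  refine ⟨lt_of_le_of_ne hx ?_, lt_of_le_of_ne hy ?_⟩
  · exact fun h => key x y hd h.symm
  · refine fun h => key y x ?_ h.symm
    have : y * x - n = x * y - n := by ring
    rw [this]; exact hd

lemma aux_surj {p : ℕ} [Fact p.Prime] {n : ℤ} (hn : Int.gcd n p = 1)
    {a b : ℤ} (hba : b ≤ a) (hmem : (a, b) ∈ Hyp n p) :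
    ∃ q ∈ {q ∈ Hyp n p | q.2 ≤ min q.1 ((p : ℤ) - q.1)}, |q.1 - q.2| = |a - b| := by
  obtain ⟨ha0, hap, hb0, hbp, hd⟩ := hmem
  obtain ⟨hapos, hbpos⟩ := hyp_pos hn ha0 hb0 hd
  by_cases hc : b ≤ (p : ℤ) - a
  · exact ⟨(a, b), ⟨⟨ha0, hap, hb0, hbp, hd⟩, le_min hba hc⟩, rfl⟩
  · push_neg at hc
    refine ⟨((p : ℤ) - b, (p : ℤ) - a), ⟨⟨by omega, by omega, by omega, by omega, ?_⟩, ?_⟩, ?_⟩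
    · have : ((p : ℤ) - b) * ((p : ℤ) - a) - n
          = (p : ℤ) * ((p : ℤ) - a - b) + (a * b - n) := by ring
      rw [this]
      exact dvd_add (Dvd.intro _ rfl) hd
    · simp only [le_min_iff]
      constructor <;> omega
    · have h1 : |(p : ℤ) - b - ((p : ℤ) - a)| = |a - b| := by
        congr 1; ring
      simp only []; simpa using h1

theorem stmt_4 (p : ℕ) [Fact p.Prime] (hodd : p ≠ 2) (n : ℤ)
    (hn : Int.gcd n p = 1) :
    Set.BijOn (fun q : ℤ × ℤ => |q.1 - q.2|)
      {q ∈ Hyp n p | q.2 ≤ min q.1 ((p : ℤ) - q.1)}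
      (Dists n p) := by
  have hp : Prime (p : ℤ) := Nat.prime_iff_prime_int.mp (Fact.out : p.Prime)
  refine ⟨fun q hq => ⟨q, hq.1, rfl⟩, ?_, ?_⟩
  · -- InjOn
    rintro ⟨x, y⟩ ⟨⟨hx0, hxp, hy0, hyp_, hd⟩, hy⟩ ⟨x', y'⟩ ⟨⟨hx0', hxp', hy0', hyp', hd'⟩, hy'⟩ heq
    simp only [le_min_iff] at hy hy'
    obtain ⟨hyx, hypx⟩ := hy
    obtain ⟨hyx', hypx'⟩ := hy'
    obtain ⟨hxpos, hypos⟩ := hyp_pos hn hx0 hy0 hd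
    obtain ⟨hxpos', hypos'⟩ := hyp_pos hn hx0' hy0' hd'
    simp only [abs_of_nonneg (sub_nonneg.mpr hyx), abs_of_nonneg (sub_nonneg.mpr hyx')] at heq
    -- heq : x - y = x' - y'
    have hdiff : (p : ℤ) ∣ x * y - x' * y' := by
      have := dvd_sub hd hd'
      simpa using this
    have hfac : (p : ℤ) ∣ (y - y') * (y + y' + (x - y)) := by
      have : (y - y') * (y + y' + (x - y)) = x * y - x' * y' := by
        linear_combination (-y') * heq
      rw [this]; exact hdiff
    rcases hp.dvd_mul.mp hfac with h | h
    · have : y - y' = 0 := by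
        refine Int.eq_zero_of_abs_lt_dvd h ?_
        rw [abs_lt]; omega
      have hy_eq : y = y' := by omega
      have : x = x' := by omega
      simp [hy_eq, this]
    · have hle : y + y' + (x - y) ≤ (p : ℤ) := by omega
      have hpos : 0 < y + y' + (x - y) := by omega
      have := Int.le_of_dvd hpos h
      have heqp : y + y' + (x - y) = (p : ℤ) := le_antisymm hle this
      have hy_eq : y = y' := by omega
      have : x = x' := by omega
      simp [hy_eq, this]
  · -- SurjOn
    rintro d ⟨⟨a, b⟩, hab, rfl⟩
    rcases le_total b a with h | h
    · obtain ⟨q, hq, hval⟩ := aux_surj hn h hab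
      exact ⟨q, hq, hval⟩
    · obtain ⟨ha0, hap, hb0, hbp, hd⟩ := hab
      have hmem' : (b, a) ∈ Hyp n p := ⟨hb0, hbp, ha0, hap, by
        have : b * a - n = a * b - n := by ring
        rw [this]; exact hd⟩
      obtain ⟨q, hq, hval⟩ := aux_surj hn h hmem'
      refine ⟨q, hq, ?_⟩
      simp only []
      show |q.1 - q.2| = |a - b|
      rw [hval, abs_sub_comm]
end

section
/- Let p be an odd prime and n an integer with gcd(n,p)=1. Then τ(n,p) = (p−1)/4 + (1+(n/p))/2 if p ≡ 1 (mod 4), and τ(n,p) = (p−3)/4 + 1 if p ≡ 3 (mod 4), where (n/p) denotes the Legendre symbol. -/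
open Finset

/-- `(a,b)` is a target for `n` modulus `c`: `a` and `b` are squares in `ℤ/cℤ`
(zero allowed) and `n + a = b` in `ℤ/cℤ`. -/
def IsTarget (n : ℤ) (c : ℕ) (a b : ZMod c) : Prop :=
  IsSquare a ∧ IsSquare b ∧ (n : ZMod c) + a = b

/-- `τ(n,c)`, the number of targets for `n` modulus `c`. -/
noncomputable def tau (n : ℤ) (c : ℕ) : ℕ :=
  ({ab : ZMod c × ZMod c | IsTarget n c ab.1 ab.2}).ncard

lemma tau_eq_card (n : ℤ) (c : ℕ) [NeZero c]
    [DecidablePred (fun a : ZMod c => IsSquare a ∧ IsSquare ((n : ZMod c) + a))] :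
    tau n c = (Finset.univ.filter
      (fun a : ZMod c => IsSquare a ∧ IsSquare ((n : ZMod c) + a))).card := by
  classical
  have hset : {ab : ZMod c × ZMod c | IsTarget n c ab.1 ab.2}
      = (fun a : ZMod c => (a, (n : ZMod c) + a)) ''
        {a : ZMod c | IsSquare a ∧ IsSquare ((n : ZMod c) + a)} := by
    ext ⟨a, b⟩
    simp only [Set.mem_setOf_eq, IsTarget, Set.mem_image, Prod.mk.injEq]
    constructor
    · rintro ⟨h1, h2, h3⟩
      exact ⟨a, ⟨h1, h3 ▸ h2⟩, rfl, h3⟩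
    · rintro ⟨x, ⟨h1, h2⟩, rfl, rfl⟩
      exact ⟨h1, h2, rfl⟩
  rw [tau, hset, Set.ncard_image_of_injective _ (fun x y h => (Prod.mk.injEq _ _ _ _ ▸ h).1)]
  rw [Set.ncard_eq_toFinset_card']
  congr 1
  ext a
  simp

section Aux

variable {p : ℕ} [Fact p.Prime]

local notation "χ" => quadraticChar (ZMod p)

lemma char_sum_shift (hodd : p ≠ 2) {n : ZMod p} (hn : n ≠ 0) :
    ∑ a : ZMod p, χ a * χ (a + n) = -1 := by
  classical
  have hchar : ringChar (ZMod p) ≠ 2 := by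
    rw [ZMod.ringChar_zmod_n]; exact hodd
  have h2 : ∑ a ∈ ({0}ᶜ : Finset (ZMod p)), χ a * χ (a + n)
      = ∑ a ∈ ({0}ᶜ : Finset (ZMod p)), χ (1 + n * a⁻¹) := by
    refine Finset.sum_congr rfl fun a ha => ?_
    have ha : a ≠ 0 := by simpa using ha
    have h : a + n = a * (1 + n * a⁻¹) := by field_simp
    rw [h, map_mul, ← mul_assoc, ← map_mul,
      show a * a = a ^ 2 by ring, quadraticChar_sq_one' ha, one_mul]
  have h3 : ∑ a ∈ ({0}ᶜ : Finset (ZMod p)), χ (1 + n * a⁻¹)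
      = ∑ b ∈ ({1}ᶜ : Finset (ZMod p)), χ b := by
    refine Finset.sum_nbij' (i := fun a => 1 + n * a⁻¹) (j := fun b => n * (b - 1)⁻¹)
      ?_ ?_ ?_ ?_ (fun a _ => rfl)
    · intro a ha
      simp only [Finset.mem_compl, Finset.mem_singleton] at *
      intro h
      have : n * a⁻¹ = 0 := by linear_combination h
      rcases mul_eq_zero.1 this with h | h
      · exact hn h
      · exact ha (by simpa using inv_eq_zero.1 h)
    · intro b hb
      simp only [Finset.mem_compl, Finset.mem_singleton] at *
      intro h
      rcases mul_eq_zero.1 h with h | h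
      · exact hn h
      · exact hb (by have := inv_eq_zero.1 h; linear_combination this)
    · intro a ha
      simp only [Finset.mem_compl, Finset.mem_singleton] at ha
      field_simp
      simp [hn]
    · intro b hb
      simp only [Finset.mem_compl, Finset.mem_singleton] at hb
      have hb1 : b - 1 ≠ 0 := sub_ne_zero.2 hb
      field_simp
      ring
  have h4 : ∑ b ∈ ({1}ᶜ : Finset (ZMod p)), χ b = -1 := by
    have := quadraticChar_sum_zero hchar
    rw [← Finset.sum_compl_add_sum ({1}ᶜ : Finset (ZMod p)) χ] at this
    simp only [compl_compl, Finset.sum_singleton, map_one] at this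
    linarith
  rw [← Finset.sum_subset (Finset.subset_univ ({0}ᶜ : Finset (ZMod p))), h2, h3, h4]
  intro a _ ha
  simp only [Finset.mem_compl, Finset.mem_singleton, not_not] at ha
  subst ha
  simp

lemma four_mul_count (hodd : p ≠ 2) {n : ZMod p} (hn : n ≠ 0)
    [DecidablePred (fun a : ZMod p => IsSquare a ∧ IsSquare (n + a))] :
    (4 : ℤ) * ((Finset.univ.filter (fun a : ZMod p => IsSquare a ∧ IsSquare (n + a))).card)
      = p + 1 + χ n + χ (-n) := by
  classical
  have hchar : ringChar (ZMod p) ≠ 2 := by rw [ZMod.ringChar_zmod_n]; exact hodd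
  have hcv : ∀ a : ZMod p, a ≠ 0 → ¬ IsSquare a → χ a = -1 :=
    fun a _ h => quadraticChar_neg_one_iff_not_isSquare.2 h
  have hcv1 : ∀ a : ZMod p, a ≠ 0 → IsSquare a → χ a = 1 :=
    fun a ha h => (quadraticChar_one_iff_isSquare ha).2 h
  have key : ∀ a : ZMod p,
      (4 : ℤ) * (if IsSquare a ∧ IsSquare (n + a) then 1 else 0)
      = (1 + χ a) * (1 + χ (n + a)) + ((if a = 0 then 1 + χ n else 0)
        + (if a = -n then 1 + χ (-n) else 0)) := by
    intro a
    by_cases ha : a = 0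
    · subst ha
      have h0 : (0 : ZMod p) ≠ -n := fun h => hn (by linear_combination h)
      have hq0 : χ (0 : ZMod p) = 0 := by simp
      simp only [add_zero]
      rw [if_neg h0, if_true, add_zero]
      by_cases hs : IsSquare n
      · rw [if_pos ⟨⟨0, by simp⟩, hs⟩, hcv1 n hn hs, hq0]; ring
      · rw [if_neg (fun h => hs h.2), hcv n hn hs, hq0]; ring
    · by_cases ha' : a = -n
      · subst ha'
        have hna : n + -n = 0 := by ring
        have h0 : (-n : ZMod p) ≠ 0 := by simpa using hn
        have hq0 : χ (0 : ZMod p) = 0 := by simp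
        simp only [hna]
        rw [if_neg h0, if_true, hq0, add_zero]
        by_cases hs : IsSquare (-n : ZMod p)
        · rw [if_pos ⟨hs, ⟨0, by simp⟩⟩, hcv1 _ h0 hs]; ring
        · rw [if_neg (fun h => hs h.1), hcv _ h0 hs]; ring
      · have hna : n + a ≠ 0 := fun h => ha' (by linear_combination h)
        rw [if_neg ha, if_neg ha', add_zero, add_zero]
        by_cases h1 : IsSquare a <;> by_cases h2 : IsSquare (n + a)
        · rw [if_pos ⟨h1, h2⟩, hcv1 a ha h1, hcv1 _ hna h2]; ring
        · rw [if_neg (by tauto), hcv1 a ha h1, hcv _ hna h2]; ring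
        · rw [if_neg (by tauto), hcv a ha h1, hcv1 _ hna h2]; ring
        · rw [if_neg (by tauto), hcv a ha h1, hcv _ hna h2]; ring
  have hsum := Finset.sum_congr rfl (fun a (_ : a ∈ (univ : Finset (ZMod p))) => key a)
  rw [← Finset.mul_sum, Finset.sum_boole] at hsum
  rw [Finset.sum_add_distrib, Finset.sum_add_distrib] at hsum
  have e1 : ∑ a : ZMod p, (1 + χ a) * (1 + χ (n + a)) = (p : ℤ) - 1 := by
    have expand : ∀ a : ZMod p, (1 + χ a) * (1 + χ (n + a))
        = 1 + (χ a + (χ (n + a) + χ a * χ (n + a))) := fun a => by ring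
    rw [Finset.sum_congr rfl fun a _ => expand a]
    rw [Finset.sum_add_distrib, Finset.sum_add_distrib, Finset.sum_add_distrib]
    have s0 : ∑ _a : ZMod p, (1 : ℤ) = p := by
      simp [Finset.card_univ, ZMod.card]
    have s1 : ∑ a : ZMod p, χ a = 0 := quadraticChar_sum_zero hchar
    have s2 : ∑ a : ZMod p, χ (n + a) = 0 := by
      have h := Equiv.sum_comp (Equiv.addLeft n) (fun b => χ b)
      simp only [Equiv.coe_addLeft] at h
      rw [h]; exact s1
    have s3 : ∑ a : ZMod p, χ a * χ (n + a) = -1 := by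
      have := char_sum_shift hodd hn
      rw [← this]
      exact Finset.sum_congr rfl fun a _ => by rw [add_comm]
    rw [s0, s1, s2, s3]; ring
  have e2 : ∑ a : ZMod p, (if a = 0 then (1 + χ n : ℤ) else 0) = 1 + χ n := by
    rw [Finset.sum_ite_eq' univ (0 : ZMod p) (fun _ => (1 + χ n : ℤ))]
    simp
  have e3 : ∑ a : ZMod p, (if a = -n then (1 + χ (-n) : ℤ) else 0) = 1 + χ (-n) := by
    rw [Finset.sum_ite_eq' univ (-n : ZMod p) (fun _ => (1 + χ (-n) : ℤ))]
    simp
  rw [e1, e2, e3] at hsum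
  rw [hsum]; ring

end Aux

theorem stmt_6 (p : ℕ) [Fact p.Prime] (hodd : p ≠ 2) (n : ℤ)
    (hn : Int.gcd n p = 1) :
    (p % 4 = 1 →
      (tau n p : ℤ) = ((p : ℤ) - 1) / 4 + (1 + legendreSym p n) / 2) ∧
    (p % 4 = 3 →
      (tau n p : ℤ) = ((p : ℤ) - 3) / 4 + 1) := by
  classical
  have hchar : ringChar (ZMod p) ≠ 2 := by rw [ZMod.ringChar_zmod_n]; exact hodd
  have hn' : (n : ZMod p) ≠ 0 := by
    intro h
    rw [ZMod.intCast_zmod_eq_zero_iff_dvd] at h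
    have hcop : IsCoprime n (p : ℤ) := Int.isCoprime_iff_gcd_eq_one.2 hn
    have : IsUnit ((p : ℤ)) := hcop.isUnit_of_dvd' h dvd_rfl
    have hp1 : p = 1 := by
      have := Int.isUnit_iff.1 this
      omega
    exact (Fact.out : p.Prime).one_lt.ne' hp1
  have h4 := four_mul_count hodd hn'
  rw [tau_eq_card n p] at *
  set t : ℤ := ((Finset.univ.filter
    (fun a : ZMod p => IsSquare a ∧ IsSquare ((n : ZMod p) + a))).card : ℤ) with ht
  have hl : legendreSym p n = quadraticChar (ZMod p) ((n : ZMod p)) := rfl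
  have hneg : quadraticChar (ZMod p) (-(n : ZMod p))
      = quadraticChar (ZMod p) (-1) * quadraticChar (ZMod p) ((n : ZMod p)) := by
    rw [← map_mul]; norm_num
  have hdich : legendreSym p n = 1 ∨ legendreSym p n = -1 := by
    rw [hl]; exact quadraticChar_dichotomy hn'
  have hm1 : quadraticChar (ZMod p) (-1) = ZMod.χ₄ (p : ZMod 4) := by
    rw [quadraticChar_neg_one hchar, ZMod.card]
  constructor
  · intro hp4
    have hχ4 : ZMod.χ₄ (p : ZMod 4) = 1 := by
      rw [ZMod.χ₄_nat_eq_if_mod_four, if_neg (by omega), if_pos hp4]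
    rw [hχ4] at hm1
    rw [hneg, hm1, ← hl, one_mul] at h4
    rcases hdich with h | h <;> rw [h] at h4 ⊢ <;> omega
  · intro hp4
    have hχ4 : ZMod.χ₄ (p : ZMod 4) = -1 := by
      rw [ZMod.χ₄_nat_eq_if_mod_four, if_neg (by omega), if_neg (by omega)]
    rw [hχ4] at hm1
    rw [hneg, hm1, ← hl] at h4
    rcases hdich with h | h <;> rw [h] at h4 <;> omega
end

section
/- Let p be an odd prime and n an integer with gcd(n,p)=1. Then τ(n,p) = |D_{n,p}|, i.e., the number of targets for n modulus p equals the number of distinct distances between coordinates of points of the modular hyperbola H_{n,p}. -/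
lemma hyp_cast {p : ℕ} [Fact p.Prime] {n : ℤ} {x y : ℤ} (h : (p : ℤ) ∣ x * y - n) :
    (x : ZMod p) * (y : ZMod p) = (n : ZMod p) := by
  have h0 : ((x * y - n : ℤ) : ZMod p) = 0 := by
    rw [ZMod.intCast_zmod_eq_zero_iff_dvd]; exact h
  push_cast at h0
  linear_combination h0

lemma habs {p : ℕ} (z : ℤ) : ((|z| : ℤ) : ZMod p) ^ 2 = ((z : ℤ) : ZMod p) ^ 2 := by
  rcases abs_cases z with ⟨hz, _⟩ | ⟨hz, _⟩ <;> rw [hz] <;> push_cast <;> ring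

lemma rep_eq {p : ℕ} [Fact p.Prime] {x u : ℤ} (hx0 : 0 ≤ x) (hxp : x < p)
    (hu0 : 0 ≤ u) (hup : u < p) (h : (x : ZMod p) = (u : ZMod p)) : x = u := by
  have h' : x % (p:ℤ) = u % (p:ℤ) := (ZMod.intCast_eq_intCast_iff x u p).mp h
  rw [Int.emod_eq_of_lt hx0 hxp, Int.emod_eq_of_lt hu0 hup] at h'
  exact h'

lemma rep_neg {p : ℕ} [Fact p.Prime] {x u : ℤ} (hx0 : 0 < x) (hxp : x < p)
    (hu0 : 0 ≤ u) (hup : u < p) (h : (x : ZMod p) = -(u : ZMod p)) : x = p - u := by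
  have h0 : ((x + u : ℤ) : ZMod p) = 0 := by push_cast; rw [h]; ring
  obtain ⟨k, hk⟩ := (ZMod.intCast_zmod_eq_zero_iff_dvd _ _).mp h0
  have hp0 : (0:ℤ) < p := by exact_mod_cast (Fact.out : p.Prime).pos
  have h1 : (0:ℤ) < p * k := by omega
  have h2 : (p:ℤ) * k < p * 2 := by omega
  have h3 : (0:ℤ) < k := by nlinarith
  have h4 : k < 2 := (mul_lt_mul_iff_right₀ hp0).mp h2
  have hk1 : k = 1 := by omega
  rw [hk1, mul_one] at hk
  omega

lemma n_ne_zero {p : ℕ} [Fact p.Prime] {n : ℤ} (hn : Int.gcd n p = 1) :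
    (n : ZMod p) ≠ 0 := by
  rw [Ne, ZMod.intCast_zmod_eq_zero_iff_dvd]
  intro hdvd
  have h1 : (p:ℤ) ∣ (Int.gcd n p : ℤ) := Int.dvd_coe_gcd hdvd dvd_rfl
  rw [hn] at h1
  have h2 : (p:ℤ) ≤ 1 := Int.le_of_dvd one_pos h1
  have h3 : 2 ≤ p := (Fact.out : p.Prime).two_le
  omega

lemma zmodTwoNeZero {p : ℕ} [Fact p.Prime] (hodd : p ≠ 2) : (2 : ZMod p) ≠ 0 := by
  intro h
  have h1 : ((2:ℕ) : ZMod p) = 0 := by exact_mod_cast h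
  have h2 : p ∣ 2 := (ZMod.natCast_eq_zero_iff _ _).mp h1
  have h3 : 2 ≤ p := (Fact.out : p.Prime).two_le
  have := Nat.le_of_dvd (by norm_num) h2
  omega

lemma key {p : ℕ} [Fact p.Prime] (hodd : p ≠ 2) {n : ℤ} (hn : Int.gcd n p = 1)
    {x y u v : ℤ} (hq : (x, y) ∈ Hyp n p) (hq' : (u, v) ∈ Hyp n p)
    (h : ((x - y : ℤ) : ZMod p) ^ 2 = ((u - v : ℤ) : ZMod p) ^ 2) :
    |x - y| = |u - v| := by
  obtain ⟨hx0, hxp, hy0, hyp, hdvd⟩ := hq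
  obtain ⟨hu0, hup, hv0, hvp, hdvd'⟩ := hq'
  simp only at hx0 hxp hy0 hyp hdvd hu0 hup hv0 hvp hdvd'
  have hnz := n_ne_zero (p := p) hn
  have h2 := zmodTwoNeZero (p := p) hodd
  have hxy := hyp_cast (p := p) hdvd
  have huv := hyp_cast (p := p) hdvd'
  push_cast at h
  -- nonzero coords
  have hX : (x : ZMod p) ≠ 0 := fun h0 => hnz (by rw [← hxy, h0, zero_mul])
  have hY : (y : ZMod p) ≠ 0 := fun h0 => hnz (by rw [← hxy, h0, mul_zero])
  have hU : (u : ZMod p) ≠ 0 := fun h0 => hnz (by rw [← huv, h0, zero_mul])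
  have hV : (v : ZMod p) ≠ 0 := fun h0 => hnz (by rw [← huv, h0, mul_zero])
  have hx0' : 0 < x := lt_of_le_of_ne hx0 (fun h0 => hX (by rw [← h0]; norm_num))
  have hy0' : 0 < y := lt_of_le_of_ne hy0 (fun h0 => hY (by rw [← h0]; norm_num))
  -- difference: ±
  have hdiff : ((x : ZMod p) - y) = (u - v) ∨ ((x : ZMod p) - y) = -((u:ZMod p) - v) := by
    have hfac : (((x:ZMod p) - y) - ((u:ZMod p) - v)) * (((x:ZMod p) - y) + ((u:ZMod p) - v)) = 0 := by
      linear_combination h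
    rcases mul_eq_zero.mp hfac with h' | h'
    · left; linear_combination h'
    · right; linear_combination h'
  have hsum2 : ((x : ZMod p) + y) ^ 2 = ((u:ZMod p) + v) ^ 2 := by
    linear_combination h + 4 * hxy - 4 * huv
  have hsum : ((x : ZMod p) + y) = (u + v) ∨ ((x : ZMod p) + y) = -((u:ZMod p) + v) := by
    have hfac : (((x:ZMod p) + y) - ((u:ZMod p) + v)) * (((x:ZMod p) + y) + ((u:ZMod p) + v)) = 0 := by
      linear_combination hsum2
    rcases mul_eq_zero.mp hfac with h' | h'
    · left; linear_combination h'
    · right; linear_combination h'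
  have half : ∀ a b : ZMod p, 2 * a = 2 * b → a = b := fun a b hab =>
    mul_left_cancel₀ h2 hab
  rcases hdiff with hd | hd <;> rcases hsum with hs | hs
  · -- x=u, y=v
    have h1 : x = u := rep_eq hx0 hxp hu0 hup (half _ _ (by linear_combination hd + hs))
    have h2 : y = v := rep_eq hy0 hyp hv0 hvp (half _ _ (by linear_combination hs - hd))
    rw [h1, h2]
  · -- x = -v, y = -u
    have h1 : x = p - v := rep_neg hx0' hxp hv0 hvp (half _ _ (by linear_combination hd + hs))
    have h2 : y = p - u := rep_neg hy0' hyp hu0 hup (half _ _ (by linear_combination hs - hd))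
    have : x - y = u - v := by omega
    rw [this]
  · -- x = v, y = u
    have h1 : x = v := rep_eq hx0 hxp hv0 hvp (half _ _ (by linear_combination hd + hs))
    have h2 : y = u := rep_eq hy0 hyp hu0 hup (half _ _ (by linear_combination hs - hd))
    rw [h1, h2, abs_sub_comm]
  · -- x = -u, y = -v
    have h1 : x = p - u := rep_neg hx0' hxp hu0 hup (half _ _ (by linear_combination hd + hs))
    have h2 : y = p - v := rep_neg hy0' hyp hv0 hvp (half _ _ (by linear_combination hs - hd))
    have : x - y = -(u - v) := by omega
    rw [this, abs_neg]


theorem stmt_7 (p : ℕ) [Fact p.Prime] (hodd : p ≠ 2) (n : ℤ)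
    (hn : Int.gcd n p = 1) :
    tau n p = (Dists n p).ncard := by
  have h2 : (2 : ZMod p) ≠ 0 := zmodTwoNeZero hodd
  have inv2 : (2 : ZMod p) * 2⁻¹ = 1 := mul_inv_cancel₀ h2
  set i : ZMod p := (2 : ZMod p)⁻¹ with hi
  set f : ℤ → ZMod p := fun d => ((d : ZMod p) * i) ^ 2 with hf
  set A : Set (ZMod p) := {a | IsSquare a ∧ IsSquare ((n : ZMod p) + a)} with hA
  -- Step 1: tau = A.ncard
  have step1 : tau n p = A.ncard := by
    have himg : {ab : ZMod p × ZMod p | IsTarget n p ab.1 ab.2}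
        = (fun a : ZMod p => (a, (n : ZMod p) + a)) '' A := by
      ext ⟨a, b⟩
      simp only [Set.mem_setOf_eq, Set.mem_image, IsTarget, hA]
      constructor
      · rintro ⟨ha, hb, hab⟩
        exact ⟨a, ⟨ha, hab ▸ hb⟩, by rw [hab]⟩
      · rintro ⟨a', ⟨ha, hb⟩, heq⟩
        rw [Prod.ext_iff] at heq
        obtain ⟨h1, h2⟩ := heq
        simp only at h1 h2
        subst h1; subst h2
        exact ⟨ha, hb, rfl⟩
    rw [tau, himg, Set.ncard_image_of_injective]
    intro a b hab
    exact congrArg Prod.fst hab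
  -- Step 2: A = f '' Dists
  have step2 : A = f '' Dists n p := by
    apply Set.Subset.antisymm
    · -- A ⊆ f '' Dists
      rintro a ⟨⟨α, hα⟩, ⟨β, hβ⟩⟩
      set x : ℤ := ((β + α).val : ℤ) with hxdef
      set y : ℤ := ((β - α).val : ℤ) with hydef
      have hx : (x : ZMod p) = β + α := by
        rw [hxdef]; push_cast; simp [ZMod.natCast_val, ZMod.cast_id]
      have hy : (y : ZMod p) = β - α := by
        rw [hydef]; push_cast; simp [ZMod.natCast_val, ZMod.cast_id]
      have hxb : x < p := by rw [hxdef]; exact_mod_cast ZMod.val_lt (β + α)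
      have hyb : y < p := by rw [hydef]; exact_mod_cast ZMod.val_lt (β - α)
      have hmem : (x, y) ∈ Hyp n p := by
        refine ⟨Int.natCast_nonneg _, hxb, Int.natCast_nonneg _, hyb, ?_⟩
        have : ((x * y - n : ℤ) : ZMod p) = 0 := by
          push_cast
          rw [hx, hy]
          linear_combination hα - hβ
        exact (ZMod.intCast_zmod_eq_zero_iff_dvd _ _).mp this
      refine ⟨|x - y|, ⟨(x, y), hmem, rfl⟩, ?_⟩
      have hd2 : ((|x - y| : ℤ) : ZMod p) ^ 2 = ((x : ZMod p) - y) ^ 2 := by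
        have := habs (p := p) (x - y)
        push_cast at this
        exact this
      show ((((|x - y| : ℤ) : ZMod p)) * i) ^ 2 = a
      rw [mul_pow, hd2, hx, hy]
      linear_combination (α ^ 2 * (2 * i + 1)) * inv2 - hα
    · -- f '' Dists ⊆ A
      rintro _ ⟨d, ⟨⟨x, y⟩, hq, rfl⟩, rfl⟩
      obtain ⟨hx0, hxp, hy0, hyp', hdvd⟩ := hq
      simp only at hx0 hxp hy0 hyp' hdvd
      have hxy := hyp_cast (p := p) hdvd
      have hd2 : ((|x - y| : ℤ) : ZMod p) ^ 2 = ((x : ZMod p) - y) ^ 2 := by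
        have := habs (p := p) (x - y)
        push_cast at this
        exact this
      constructor
      · exact ⟨((|x - y| : ℤ) : ZMod p) * i, by simp [hf]; ring⟩
      · refine ⟨((x : ZMod p) + y) * i, ?_⟩
        show (n : ZMod p) + (((|x - y| : ℤ) : ZMod p) * i) ^ 2
            = (((x : ZMod p) + y) * i) * ((((x : ZMod p) + y)) * i)
        rw [mul_pow, hd2]
        linear_combination (-4 * i ^ 2) * hxy - ((n : ZMod p) * (1 + 2 * i)) * inv2
  -- Step 3: f injective on Dists
  have step3 : Set.InjOn f (Dists n p) := by
    rintro d₁ ⟨⟨x, y⟩, hq, rfl⟩ d₂ ⟨⟨u, v⟩, hq', rfl⟩ hfeq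
    simp only [hf] at hfeq
    have hsq : ((|x - y| : ℤ) : ZMod p) ^ 2 = ((|u - v| : ℤ) : ZMod p) ^ 2 := by
      linear_combination 4 * hfeq
        - ((((|x - y| : ℤ) : ZMod p)) ^ 2 - (((|u - v| : ℤ) : ZMod p)) ^ 2) * (2 * i + 1) * inv2
    rw [habs, habs] at hsq
    exact key hodd hn hq hq' hsq
  rw [step1, step2, Set.ncard_image_of_injOn step3]
end

section
/- Let n be an integer and let s, t be integers greater than 1 with gcd(s,t) = 1. Then τ(n, s·t) = τ(n,s)·τ(n,t); that is, as a function of the modulus, τ(n,·) is multiplicative. -/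
lemma prod_isSquare_iff {A B : Type*} [Monoid A] [Monoid B] (x : A × B) :
    IsSquare x ↔ IsSquare x.1 ∧ IsSquare x.2 := by
  constructor
  · rintro ⟨r, hr⟩
    exact ⟨⟨r.1, congrArg Prod.fst hr⟩, ⟨r.2, congrArg Prod.snd hr⟩⟩
  · rintro ⟨⟨r, hr⟩, ⟨q, hq⟩⟩
    exact ⟨(r, q), Prod.ext hr hq⟩

lemma mulEquiv_isSquare_iff {A B : Type*} [Monoid A] [Monoid B] (e : A ≃* B) (x : A) :
    IsSquare (e x) ↔ IsSquare x := by
  constructor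
  · intro h; have := h.map e.symm.toMonoidHom; simpa using this
  · intro h; exact h.map e.toMonoidHom

lemma key_s8 (n : ℤ) (s t : ℕ) (hst : Nat.Coprime s t) (a b : ZMod (s * t)) :
    IsTarget n (s * t) a b ↔
      (IsTarget n s ((ZMod.chineseRemainder hst) a).1 ((ZMod.chineseRemainder hst) b).1 ∧
       IsTarget n t ((ZMod.chineseRemainder hst) a).2 ((ZMod.chineseRemainder hst) b).2) := by
  set e := ZMod.chineseRemainder hst with he
  have h1 : ∀ x : ZMod (s * t), IsSquare x ↔ IsSquare (e x).1 ∧ IsSquare (e x).2 := by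
    intro x
    rw [← prod_isSquare_iff]
    exact (mulEquiv_isSquare_iff e.toMulEquiv x).symm
  have h2 : ((n : ZMod (s * t)) + a = b) ↔
      ((n : ZMod s) + (e a).1 = (e b).1 ∧ (n : ZMod t) + (e a).2 = (e b).2) := by
    rw [← e.injective.eq_iff, map_add, map_intCast, Prod.ext_iff]
    constructor <;> exact fun h => h
  unfold IsTarget
  rw [h1 a, h1 b, h2]
  tauto

theorem stmt_8 (n : ℤ) (s t : ℕ) (hs : 1 < s) (ht : 1 < t)
    (hst : Nat.Coprime s t) :
    tau n (s * t) = tau n s * tau n t := by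
  set e := ZMod.chineseRemainder hst with he
  let F : (ZMod (s * t)) × (ZMod (s * t)) ≃ (ZMod s × ZMod s) × (ZMod t × ZMod t) :=
    (e.toEquiv.prodCongr e.toEquiv).trans (Equiv.prodProdProdComm _ _ _ _)
  have himg : F '' {ab : ZMod (s*t) × ZMod (s*t) | IsTarget n (s*t) ab.1 ab.2}
      = {ab : ZMod s × ZMod s | IsTarget n s ab.1 ab.2} ×ˢ
        {ab : ZMod t × ZMod t | IsTarget n t ab.1 ab.2} := by
    ext ⟨⟨a1, b1⟩, ⟨a2, b2⟩⟩
    rw [Equiv.image_eq_preimage_symm]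
    have hFsymm : F.symm ((a1, b1), (a2, b2)) = (e.symm (a1, a2), e.symm (b1, b2)) := rfl
    simp only [Set.mem_preimage, hFsymm, Set.mem_setOf_eq, Set.mem_prod]
    rw [key_s8 n s t hst]
    simp [← he]
  have hcard : ∀ {α β : Type} (S : Set α) (E : α ≃ β), (E '' S).ncard = S.ncard := by
    intro α β S E
    exact Set.ncard_image_of_injective S E.injective
  rw [tau, ← hcard _ F, himg, tau, tau]
  rw [← Nat.card_coe_set_eq, ← Nat.card_coe_set_eq, ← Nat.card_coe_set_eq,
    Nat.card_congr (Equiv.Set.prod _ _), Nat.card_prod]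
end

section
/- Let p be an odd prime, n an integer with gcd(n,p)=1, and k ≥ 1. If (a,b) is a target for n modulus p^k with a ≠ 0 and b ≠ 0 in ℤ/p^kℤ, then the number of targets (a',b') for n modulus p^{k+1} whose reductions modulo p^k satisfy a' ≡ a (mod p^k) and b' ≡ b (mod p^k) is exactly p. -/
lemma key_lift (p : ℕ) [hp : Fact p.Prime] (hodd : p ≠ 2) (k : ℕ) (hk : 1 ≤ k)
    (a : ZMod (p ^ k)) (hsq : IsSquare a) (ha : a ≠ 0)
    (x : ZMod (p ^ (k + 1)))
    (hx : ZMod.castHom (pow_dvd_pow p k.le_succ) (ZMod (p ^ k)) x = a) :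
    IsSquare x := by
  haveI : NeZero (p ^ k) := ⟨pow_ne_zero k hp.out.pos.ne'⟩
  haveI : NeZero (p ^ (k+1)) := ⟨pow_ne_zero _ hp.out.pos.ne'⟩
  obtain ⟨s', hs'⟩ := hsq
  set s : ℕ := s'.val with hs_def
  have hs'cast : ((s : ℕ) : ZMod (p^k)) = s' := by
    simp [hs_def, ZMod.natCast_val, ZMod.cast_id]
  set A : ℕ := x.val with hA_def
  have hAcast : ((A : ℕ) : ZMod (p^k)) = a := by
    rw [← hx, ZMod.castHom_apply, hA_def, ZMod.natCast_val]
  have hAx : ((A : ℕ) : ZMod (p^(k+1))) = x := by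
    simp [hA_def, ZMod.natCast_val, ZMod.cast_id]
  -- divisibility: p^k ∣ A - s^2
  have h1 : ((p:ℤ))^k ∣ (A:ℤ) - (s:ℤ)^2 := by
    have : (((A:ℤ) - (s:ℤ)^2 : ℤ) : ZMod (p^k)) = 0 := by
      push_cast
      rw [hAcast, hs'cast, hs', sq]
      ring
    rwa [ZMod.intCast_zmod_eq_zero_iff_dvd, Nat.cast_pow] at this
  -- s ≠ 0
  have hsne : s ≠ 0 := by
    intro h
    apply ha
    rw [hs', ← hs'cast, h]
    simp
  have hnd : ¬ (p^k ∣ s^2) := by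
    intro h
    apply ha
    have h0 : ((s^2 : ℕ) : ZMod (p^k)) = 0 := (ZMod.natCast_eq_zero_iff _ _).2 h
    have h2 : s' * s' = 0 := by
      rw [← hs'cast, ← sq]; push_cast at h0 ⊢; exact h0
    rw [hs', h2]
  -- p-adic valuation of s
  set m : ℕ := s.factorization p with hm_def
  set w : ℕ := s / p ^ m with hw_def
  have hsw : p ^ m * w = s := Nat.ordProj_mul_ordCompl_eq_self s p
  have hw : ¬ p ∣ w := Nat.not_dvd_ordCompl hp.out hsne
  have h2m : 2 * m + 1 ≤ k := by
    by_contra hcon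
    apply hnd
    calc p ^ k ∣ p ^ (2*m) := pow_dvd_pow p (by omega)
    _ ∣ s ^ 2 := ⟨w^2, by rw [← hsw]; ring⟩
  have hmk : m ≤ k := by omega
  -- T
  obtain ⟨T, hT⟩ := h1
  -- z
  have h2w : ((2 * w : ℕ) : ZMod p) ≠ 0 := by
    rw [Ne, ZMod.natCast_eq_zero_iff]
    intro h
    rcases (Nat.Prime.dvd_mul hp.out).1 h with h' | h'
    · exact hodd ((Nat.prime_dvd_prime_iff_eq hp.out Nat.prime_two).1 h')
    · exact hw h'
  set u : ZMod p := (T : ZMod p) * ((2 * w : ℕ) : ZMod p)⁻¹ with hu_def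
  set z : ℕ := u.val with hz_def
  haveI : NeZero p := ⟨hp.out.pos.ne'⟩
  have hz : (p : ℤ) ∣ 2 * (w:ℤ) * (z:ℤ) - T := by
    have : ((2 * (w:ℤ) * (z:ℤ) - T : ℤ) : ZMod p) = 0 := by
      push_cast
      have hzc : ((z : ℕ) : ZMod p) = u := by
        simp [hz_def, ZMod.natCast_val, ZMod.cast_id]
      have h2w' : (2 * (w : ZMod p)) ≠ 0 := by push_cast at h2w; exact h2w
      rw [hzc, hu_def]
      field_simp
      push_cast; ring
    rwa [ZMod.intCast_zmod_eq_zero_iff_dvd] at this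
  -- the square root
  set y : ℤ := (s:ℤ) + (z:ℤ) * (p:ℤ) ^ (k - m) with hy_def
  have hq : (p:ℤ) ^ m * (p:ℤ) ^ (k - m) = (p:ℤ) ^ k := by
    rw [← pow_add]; congr 1; omega
  have hsz : (s : ℤ) = (p:ℤ)^m * (w:ℤ) := by exact_mod_cast (hsw.symm : (s:ℕ) = p^m * w)
  have hkey : y ^ 2 - (A:ℤ) = (p:ℤ)^k * (2 * (w:ℤ) * (z:ℤ) - T) + (z:ℤ)^2 * ((p:ℤ)^(k-m))^2 := by
    have hA : (A:ℤ) = (s:ℤ)^2 + (p:ℤ)^k * T := by linarith [hT]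
    rw [hy_def, hA, hsz, ← hq]
    ring
  have hdvd : ((p:ℤ))^(k+1) ∣ y^2 - (A:ℤ) := by
    rw [hkey]
    apply dvd_add
    · obtain ⟨c, hc⟩ := hz
      exact ⟨c, by rw [hc]; ring⟩
    · apply Dvd.dvd.mul_left
      have : ((p:ℤ)^(k-m))^2 = (p:ℤ)^(2*(k-m)) := by rw [← pow_mul]; ring_nf
      rw [this]
      exact pow_dvd_pow _ (by omega)
  refine ⟨(y : ZMod (p^(k+1))), ?_⟩
  have : ((y^2 - (A:ℤ) : ℤ) : ZMod (p^(k+1))) = 0 := by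
    rw [ZMod.intCast_zmod_eq_zero_iff_dvd]
    exact_mod_cast hdvd
  push_cast at this
  rw [hAx, sub_eq_zero] at this
  rw [← this]
  ring

lemma fiber_ncard (p : ℕ) [hp : Fact p.Prime] (k : ℕ) (a : ZMod (p ^ k)) :
    ({x : ZMod (p ^ (k+1)) |
        ZMod.castHom (pow_dvd_pow p k.le_succ) (ZMod (p ^ k)) x = a}).ncard = p := by
  haveI : NeZero p := ⟨hp.out.pos.ne'⟩
  haveI : NeZero (p ^ k) := ⟨pow_ne_zero k hp.out.pos.ne'⟩
  haveI : NeZero (p ^ (k+1)) := ⟨pow_ne_zero _ hp.out.pos.ne'⟩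
  set g : ZMod p → ZMod (p ^ (k+1)) :=
    fun t => ((a.val + t.val * p ^ k : ℕ) : ZMod (p ^ (k+1))) with hg_def
  have hbound : ∀ t : ZMod p, a.val + t.val * p ^ k < p ^ (k+1) := by
    intro t
    have h1 : a.val < p ^ k := ZMod.val_lt a
    have h2 : t.val + 1 ≤ p := ZMod.val_lt t
    calc a.val + t.val * p ^ k < p ^ k + t.val * p ^ k := by omega
    _ = (t.val + 1) * p ^ k := by ring
    _ ≤ p * p ^ k := Nat.mul_le_mul_right _ h2
    _ = p ^ (k+1) := by rw [pow_succ]; ring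
  have hginj : Function.Injective g := by
    intro t1 t2 h
    have := congrArg ZMod.val h
    rw [hg_def] at this
    simp only [ZMod.val_cast_of_lt (hbound t1), ZMod.val_cast_of_lt (hbound t2)] at this
    have hpk : 0 < p ^ k := pow_pos hp.out.pos k
    have h3 : t1.val * p ^ k = t2.val * p ^ k := by omega
    have hval : t1.val = t2.val := Nat.eq_of_mul_eq_mul_right hpk h3
    exact ZMod.val_injective _ hval
  have himg : g '' Set.univ =
      {x : ZMod (p ^ (k+1)) |
        ZMod.castHom (pow_dvd_pow p k.le_succ) (ZMod (p ^ k)) x = a} := by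
    ext x
    simp only [Set.image_univ, Set.mem_range, Set.mem_setOf_eq]
    constructor
    · rintro ⟨t, rfl⟩
      rw [hg_def]
      show ZMod.castHom _ (ZMod (p^k)) ((a.val + t.val * p ^ k : ℕ) : ZMod (p^(k+1))) = a
      rw [map_natCast]
      push_cast
      rw [show ((p : ZMod (p^k)))^k = 0 from by rw [← Nat.cast_pow, ZMod.natCast_self]]
      simp [ZMod.natCast_val, ZMod.cast_id]
    · intro hx
      -- x.val ≡ a.val mod p^k
      have hxv : ((x.val : ℕ) : ZMod (p^k)) = a := by
        rw [← hx, ZMod.castHom_apply, ZMod.natCast_val]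
      have hxa : ((p:ℤ))^k ∣ (x.val : ℤ) - (a.val : ℤ) := by
        have : (((x.val : ℤ) - (a.val : ℤ) : ℤ) : ZMod (p^k)) = 0 := by
          push_cast
          rw [hxv, ZMod.natCast_val, ZMod.cast_id, sub_self]
        rw [ZMod.intCast_zmod_eq_zero_iff_dvd] at this
        exact_mod_cast this
      obtain ⟨d, hd⟩ := hxa
      refine ⟨(d : ZMod p), ?_⟩
      have htd : (p:ℤ) ∣ (((d : ZMod p).val : ℤ) - d) := by
        have : ((((d : ZMod p).val : ℤ) - d : ℤ) : ZMod p) = 0 := by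
          push_cast
          rw [ZMod.natCast_val, ZMod.cast_id]
          ring
        rwa [ZMod.intCast_zmod_eq_zero_iff_dvd] at this
      obtain ⟨e, he⟩ := htd
      have hdvd : ((p:ℤ))^(k+1) ∣ ((a.val + (d : ZMod p).val * p ^ k : ℕ) : ℤ) - (x.val : ℤ) := by
        push_cast
        have : ((a.val:ℤ) + ((d : ZMod p).val:ℤ) * (p:ℤ) ^ k) - (x.val:ℤ)
            = (p:ℤ)^k * (((d : ZMod p).val:ℤ) - d) - ((x.val:ℤ) - a.val - (p:ℤ)^k * d) := by ring
        rw [this, hd, he]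
        ring_nf
        exact ⟨e, by ring⟩
      have : (((a.val + (d : ZMod p).val * p ^ k : ℕ) : ℤ) : ZMod (p^(k+1)))
          = ((x.val : ℤ) : ZMod (p^(k+1))) := by
        rw [← sub_eq_zero, ← Int.cast_sub, ZMod.intCast_zmod_eq_zero_iff_dvd]
        exact_mod_cast hdvd
      rw [hg_def]
      simpa [ZMod.natCast_val, ZMod.cast_id] using this
  rw [← himg, Set.ncard_image_of_injective _ hginj, Set.ncard_univ, Nat.card_zmod]

theorem stmt_9 (p : ℕ) [Fact p.Prime] (hodd : p ≠ 2) (n : ℤ)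
    (hn : Int.gcd n p = 1) (k : ℕ) (hk : 1 ≤ k)
    (a b : ZMod (p ^ k)) (hab : IsTarget n (p ^ k) a b)
    (ha : a ≠ 0) (hb : b ≠ 0) :
    ({q : ZMod (p ^ (k + 1)) × ZMod (p ^ (k + 1)) |
        IsTarget n (p ^ (k + 1)) q.1 q.2 ∧
        ZMod.castHom (pow_dvd_pow p k.le_succ) (ZMod (p ^ k)) q.1 = a ∧
        ZMod.castHom (pow_dvd_pow p k.le_succ) (ZMod (p ^ k)) q.2 = b}).ncard
      = p := by
  obtain ⟨hsa, hsb, heq⟩ := hab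
  have hset : {q : ZMod (p ^ (k + 1)) × ZMod (p ^ (k + 1)) |
        IsTarget n (p ^ (k + 1)) q.1 q.2 ∧
        ZMod.castHom (pow_dvd_pow p k.le_succ) (ZMod (p ^ k)) q.1 = a ∧
        ZMod.castHom (pow_dvd_pow p k.le_succ) (ZMod (p ^ k)) q.2 = b}
      = (fun x : ZMod (p^(k+1)) => (x, (n : ZMod (p^(k+1))) + x)) ''
        {x : ZMod (p ^ (k+1)) |
          ZMod.castHom (pow_dvd_pow p k.le_succ) (ZMod (p ^ k)) x = a} := by
    ext q
    simp only [Set.mem_setOf_eq, Set.mem_image]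
    constructor
    · rintro ⟨⟨hq1, hq2, hq3⟩, hca, hcb⟩
      exact ⟨q.1, hca, by rw [hq3]⟩
    · rintro ⟨x, hxF, rfl⟩
      have hcb : ZMod.castHom (pow_dvd_pow p k.le_succ) (ZMod (p ^ k))
          ((n : ZMod (p^(k+1))) + x) = b := by
        rw [map_add, map_intCast, hxF, heq]
      exact ⟨⟨key_lift p hodd k hk a hsa ha x hxF,
        key_lift p hodd k hk b hsb hb _ hcb, rfl⟩, hxF, hcb⟩
  rw [hset, Set.ncard_image_of_injective _ (fun x y h => congrArg Prod.fst h),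
    fiber_ncard]
end

section
/- Let p be an odd prime, n an integer with gcd(n,p)=1, and k ≥ 1. If (0,b) is a target for n modulus p^k, then the number of targets (a',b') for n modulus p^{k+1} with a' ≡ 0 (mod p^k) and b' ≡ b (mod p^k) equals (p+1)/2 if k is even, and equals 1 if k is odd. -/
open Finset in
lemma card_squares (p : ℕ) [Fact p.Prime] (hodd : p ≠ 2) :
    ({t : ZMod p | IsSquare t}).ncard = (p + 1) / 2 := by
  classical
  have hp : p.Prime := Fact.out
  have h2 : (2 : ZMod p) ≠ 0 := by
    intro h
    have hd : (p : ℕ) ∣ 2 := (ZMod.natCast_eq_zero_iff 2 p).mp (by exact_mod_cast h)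
    exact hodd ((Nat.prime_dvd_prime_iff_eq hp Nat.prime_two).mp hd)
  haveI : NeZero p := ⟨hp.ne_zero⟩
  set S : Finset (ZMod p) := univ.filter (fun a => IsSquare a) with hS
  have hzero : (0 : ZMod p) ∈ S := by simp [hS]
  have hcard : (univ : Finset (ZMod p)).card =
      ∑ a ∈ S, (univ.filter fun x => x * x = a).card := by
    apply Finset.card_eq_sum_card_fiberwise
    intro x _
    simp only [hS, mem_filter, mem_univ, true_and]
    exact Finset.mem_filter.mpr ⟨mem_univ _, x, rfl⟩
  have fib : ∀ a ∈ S, (univ.filter fun x => x * x = a).card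
      = if a = 0 then 1 else 2 := by
    intro a ha
    obtain ⟨r, hr⟩ : IsSquare a := by simpa [hS] using ha
    by_cases h0 : a = 0
    · subst h0
      rw [if_pos rfl]
      have h1 : (univ.filter fun x : ZMod p => x * x = 0) = {0} := by
        ext x; simp [mul_self_eq_zero]
      rw [h1, Finset.card_singleton]
    · simp only [if_neg h0]
      have hr0 : r ≠ 0 := by rintro rfl; simp at hr; exact h0 hr
      have hrne : r ≠ -r := by
        intro h
        have h2r : (2 : ZMod p) * r = 0 := by
          have hrr : r + r = 0 := by rw [eq_neg_iff_add_eq_zero] at h; exact h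
          linear_combination hrr
        rcases mul_eq_zero.mp h2r with h' | h'
        · exact h2 h'
        · exact hr0 h'
      have : (univ.filter fun x : ZMod p => x * x = a) = {r, -r} := by
        ext x
        simp only [mem_filter, mem_univ, true_and, mem_insert, mem_singleton, hr]
        exact mul_self_eq_mul_self_iff
      rw [this, Finset.card_pair hrne]
  have hsum : (univ : Finset (ZMod p)).card = 1 + 2 * (S.card - 1) := by
    rw [hcard, Finset.sum_congr rfl fib, ← Finset.add_sum_erase _ _ hzero, if_pos rfl]
    congr 1
    rw [Finset.sum_ite_of_false, Finset.sum_const, smul_eq_mul,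
      Finset.card_erase_of_mem hzero, mul_comm]
    intro x hx
    exact (Finset.mem_erase.mp hx).1
  have huniv : (univ : Finset (ZMod p)).card = p := by
    rw [Finset.card_univ, ZMod.card]
  have hodd' : p % 2 = 1 := Nat.odd_iff.mp (hp.odd_of_ne_two hodd)
  have hSpos : 1 ≤ S.card := Finset.card_pos.mpr ⟨0, hzero⟩
  have hfin : ({t : ZMod p | IsSquare t}).ncard = S.card := by
    rw [Set.ncard_eq_toFinset_card']
    congr 1
    ext x
    simp [hS]
  rw [hfin]
  omega

lemma isSquare_intCast_iff (m : ℕ) [NeZero m] (N : ℤ) :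
    IsSquare (N : ZMod m) ↔ ∃ s : ℤ, (m : ℤ) ∣ N - s ^ 2 := by
  constructor
  · rintro ⟨r, hr⟩
    refine ⟨(ZMod.cast r : ℤ), ?_⟩
    rw [← ZMod.intCast_zmod_eq_zero_iff_dvd]
    push_cast
    rw [hr]
    ring
  · rintro ⟨s, hs⟩
    refine ⟨(s : ZMod m), ?_⟩
    have h0 : ((N - s ^ 2 : ℤ) : ZMod m) = 0 := (ZMod.intCast_zmod_eq_zero_iff_dvd _ _).mpr hs
    push_cast at h0
    have : (N : ZMod m) = (s : ZMod m) ^ 2 := by linear_combination h0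
    rw [this]; ring

lemma sq_lift (p : ℕ) (hp : p.Prime) (hodd : p ≠ 2) (k : ℕ) (hk : 1 ≤ k)
    (N : ℤ) (hN : ¬ (p : ℤ) ∣ N) (s : ℤ) (h : (p : ℤ) ^ k ∣ N - s ^ 2) :
    ∃ s' : ℤ, (p : ℤ) ^ (k + 1) ∣ N - s' ^ 2 := by
  haveI : Fact p.Prime := ⟨hp⟩
  haveI : NeZero p := ⟨hp.ne_zero⟩
  obtain ⟨c, hc⟩ := h
  have hs : ¬ (p : ℤ) ∣ s := by
    intro hps
    apply hN
    have h1 : (p : ℤ) ∣ s ^ 2 := dvd_pow hps two_ne_zero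
    have h2 : (p : ℤ) ∣ (p : ℤ) ^ k * c := (dvd_pow_self (p:ℤ) (by omega)).mul_right c
    have : N = s ^ 2 + (p : ℤ) ^ k * c := by linarith [hc]
    rw [this]; exact dvd_add h1 h2
  have h2s : ((2 * s : ℤ) : ZMod p) ≠ 0 := by
    intro h0
    have hd := (ZMod.intCast_zmod_eq_zero_iff_dvd _ _).mp h0
    rcases (Int.Prime.dvd_mul' (by exact_mod_cast hp) hd) with h' | h'
    · have h2' : (p : ℕ) ∣ 2 := by exact_mod_cast h'
      exact hodd ((Nat.prime_dvd_prime_iff_eq hp Nat.prime_two).mp h2')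
    · exact hs h'
  set u : ZMod p := ((c : ZMod p) / ((2 * s : ℤ) : ZMod p)) with hu
  set m : ℤ := (u.val : ℤ) with hm
  have hmu : ((m : ℤ) : ZMod p) = u := by
    rw [hm]; push_cast; rw [ZMod.natCast_val, ZMod.cast_id]
  have hdvd : (p : ℤ) ∣ c - 2 * s * m := by
    have h0 : ((c - 2 * s * m : ℤ) : ZMod p) = 0 := by
      have h2s' : (2 * (s : ZMod p)) ≠ 0 := by push_cast at h2s; exact h2s
      push_cast
      push_cast at hmu
      rw [hmu, hu]
      push_cast
      rw [← mul_div_assoc, mul_div_cancel_left₀ _ h2s', sub_self]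
    exact (ZMod.intCast_zmod_eq_zero_iff_dvd _ _).mp h0
  refine ⟨s + p ^ k * m, ?_⟩
  have key : N - (s + p ^ k * m) ^ 2
      = (p : ℤ) ^ k * (c - 2 * s * m) - ((p : ℤ) ^ k) ^ 2 * m ^ 2 := by
    linear_combination hc
  rw [key]
  apply dvd_sub
  · rw [pow_succ]
    exact mul_dvd_mul_left _ hdvd
  · have hd2 : (p : ℤ) ^ (k + 1) ∣ ((p : ℤ) ^ k) ^ 2 := by
      rw [← pow_mul]
      exact pow_dvd_pow _ (by omega)
    exact hd2.mul_right _

lemma core_val (p : ℕ) (hp : p.Prime) (k : ℕ) (t : ℕ) (ht : ¬ p ∣ t) (s : ℤ)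
    (h : (p : ℤ) ^ (k + 1) ∣ (p : ℤ) ^ k * t - s ^ 2) :
    ∃ j w : ℕ, k = 2 * j ∧ (p : ℤ) ∣ (t : ℤ) - (w : ℤ) ^ 2 := by
  have hp0 : ((p : ℤ)) ≠ 0 := by exact_mod_cast hp.ne_zero
  have hpk0 : ((p : ℤ) ^ k) ≠ 0 := pow_ne_zero _ hp0
  have hcancel : (p : ℤ) ^ (k + 1) ∣ (p : ℤ) ^ k * t → p ∣ t := by
    rintro ⟨d, hd⟩
    rw [pow_succ, mul_assoc] at hd
    have : (t : ℤ) = p * d := mul_left_cancel₀ hpk0 hd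
    have : (p : ℤ) ∣ (t : ℤ) := ⟨d, this⟩
    exact_mod_cast this
  have hs0 : s ≠ 0 := by
    rintro rfl
    apply ht
    apply hcancel
    simpa using h
  set S : ℕ := s.natAbs with hSdef
  have hSsq : ((S : ℤ)) ^ 2 = s ^ 2 := by
    rw [sq, sq, ← Int.natCast_mul, Int.natAbs_mul_self]
  have hS0 : S ≠ 0 := Int.natAbs_ne_zero.mpr hs0
  obtain ⟨j, w, hw, hS⟩ := Nat.exists_eq_pow_mul_and_not_dvd hS0 p hp.ne_one
  have hsq : s ^ 2 = (p : ℤ) ^ (2 * j) * (w : ℤ) ^ 2 := by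
    rw [← hSsq, hS]
    push_cast
    ring
  -- k ≤ 2j
  have hk2j : k ≤ 2 * j := by
    have h1 : (p : ℤ) ^ k ∣ s ^ 2 := by
      have h2 : (p : ℤ) ^ k ∣ (p : ℤ) ^ k * t - s ^ 2 :=
        (pow_dvd_pow _ k.le_succ).trans h
      have h3 : (p : ℤ) ^ k ∣ (p : ℤ) ^ k * t := Dvd.intro _ rfl
      simpa using dvd_sub h3 h2
    rw [hsq] at h1
    have h4 : (p : ℤ) ^ k ∣ (p : ℤ) ^ (2 * j) := by
      have hcop : IsCoprime ((p : ℤ) ^ k) ((w : ℤ) ^ 2) := by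
        apply IsCoprime.pow
        rw [Int.isCoprime_iff_gcd_eq_one, Int.gcd_natCast_natCast]
        exact hp.coprime_iff_not_dvd.mpr hw
      exact hcop.dvd_of_dvd_mul_right h1
    have h4' : p ^ k ∣ p ^ (2 * j) := by exact_mod_cast h4
    exact (Nat.pow_dvd_pow_iff_le_right hp.one_lt).mp h4'
  -- 2j ≤ k
  have h2jk : 2 * j ≤ k := by
    by_contra hlt
    push_neg at hlt
    apply ht
    apply hcancel
    have h5 : (p : ℤ) ^ (k + 1) ∣ s ^ 2 := by
      rw [hsq]
      exact dvd_mul_of_dvd_left (pow_dvd_pow _ (by omega)) _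
    have h6 : (p : ℤ) ^ k * t = ((p : ℤ) ^ k * t - s ^ 2) + s ^ 2 := by ring
    rw [h6]
    exact dvd_add h h5
  have hkj : k = 2 * j := le_antisymm hk2j h2jk
  refine ⟨j, w, hkj, ?_⟩
  have h7 : (p : ℤ) ^ (k + 1) ∣ (p : ℤ) ^ k * ((t : ℤ) - (w : ℤ) ^ 2) := by
    have : (p : ℤ) ^ k * ((t : ℤ) - (w : ℤ) ^ 2) = (p : ℤ) ^ k * t - s ^ 2 := by
      rw [hsq, hkj]; ring
    rw [this]; exact h
  obtain ⟨d, hd⟩ := h7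
  exact ⟨d, mul_left_cancel₀ hpk0 (by rw [hd]; ring)⟩

theorem stmt_10 (p : ℕ) [Fact p.Prime] (hodd : p ≠ 2) (n : ℤ)
    (hn : Int.gcd n p = 1) (k : ℕ) (hk : 1 ≤ k)
    (b : ZMod (p ^ k)) (hb : IsTarget n (p ^ k) 0 b) :
    (Even k →
      ({q : ZMod (p ^ (k + 1)) × ZMod (p ^ (k + 1)) |
          IsTarget n (p ^ (k + 1)) q.1 q.2 ∧
          ZMod.castHom (pow_dvd_pow p k.le_succ) (ZMod (p ^ k)) q.1 = 0 ∧
          ZMod.castHom (pow_dvd_pow p k.le_succ) (ZMod (p ^ k)) q.2 = b}).ncard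
        = (p + 1) / 2) ∧
    (Odd k →
      ({q : ZMod (p ^ (k + 1)) × ZMod (p ^ (k + 1)) |
          IsTarget n (p ^ (k + 1)) q.1 q.2 ∧
          ZMod.castHom (pow_dvd_pow p k.le_succ) (ZMod (p ^ k)) q.1 = 0 ∧
          ZMod.castHom (pow_dvd_pow p k.le_succ) (ZMod (p ^ k)) q.2 = b}).ncard
        = 1) := by
  have hp : p.Prime := Fact.out
  haveI : NeZero p := ⟨hp.ne_zero⟩
  haveI : NeZero (p ^ k) := ⟨pow_ne_zero _ hp.ne_zero⟩
  haveI : NeZero (p ^ (k + 1)) := ⟨pow_ne_zero _ hp.ne_zero⟩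
  have hpn : ¬ (p : ℤ) ∣ n := by
    intro hd
    have hco : IsCoprime (n : ℤ) (p : ℤ) := Int.isCoprime_iff_gcd_eq_one.mpr hn
    have : IsUnit ((p : ℤ)) := hco.isUnit_of_dvd' hd dvd_rfl
    rcases Int.isUnit_iff.mp this with h | h <;>
      [exact hp.one_lt.ne' (by exact_mod_cast h); omega]
  have hbn : b = ((n : ℤ) : ZMod (p ^ k)) := by
    have := hb.2.2; rw [add_zero] at this; exact this.symm
  have hnsq : IsSquare ((n : ℤ) : ZMod (p ^ k)) := hbn ▸ hb.2.1
  obtain ⟨s0, hs0⟩ := (isSquare_intCast_iff (p ^ k) n).mp hnsq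
  rw [Nat.cast_pow] at hs0
  -- the parametrization
  set f : ZMod p → ZMod (p ^ (k + 1)) × ZMod (p ^ (k + 1)) :=
    fun t => (((p ^ k * t.val : ℕ) : ZMod (p ^ (k + 1))),
      (n : ZMod (p ^ (k + 1))) + ((p ^ k * t.val : ℕ) : ZMod (p ^ (k + 1)))) with hf
  have hpkpos : 0 < p ^ k := pow_pos hp.pos k
  have hlt : ∀ t : ZMod p, p ^ k * t.val < p ^ (k + 1) := by
    intro t
    rw [pow_succ]
    exact mul_lt_mul_of_pos_left (ZMod.val_lt t) hpkpos
  have hfinj : Function.Injective f := by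
    intro t t' h
    have h1 := congrArg Prod.fst h
    simp only [hf] at h1
    have h2 := congrArg ZMod.val h1
    rw [ZMod.val_cast_of_lt (hlt t), ZMod.val_cast_of_lt (hlt t')] at h2
    have h3 : t.val = t'.val := Nat.eq_of_mul_eq_mul_left hpkpos h2
    exact ZMod.val_injective p h3
  set T : Set (ZMod p) :=
    {t : ZMod p | IsSquare (((p ^ k * t.val : ℕ) : ZMod (p ^ (k + 1))))} with hT
  have hset : {q : ZMod (p ^ (k + 1)) × ZMod (p ^ (k + 1)) |
          IsTarget n (p ^ (k + 1)) q.1 q.2 ∧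
          ZMod.castHom (pow_dvd_pow p k.le_succ) (ZMod (p ^ k)) q.1 = 0 ∧
          ZMod.castHom (pow_dvd_pow p k.le_succ) (ZMod (p ^ k)) q.2 = b} = f '' T := by
    ext q
    simp only [Set.mem_setOf_eq, Set.mem_image]
    constructor
    · rintro ⟨⟨hsq1, hsq2, heq⟩, hc1, hc2⟩
      have hval : ((q.1.val : ℕ) : ZMod (p ^ k)) = 0 := by
        rw [ZMod.natCast_val, ← ZMod.castHom_apply (h := pow_dvd_pow p k.le_succ), hc1]
      have hdvd : p ^ k ∣ q.1.val := (ZMod.natCast_eq_zero_iff _ _).mp hval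
      refine ⟨((q.1.val / p ^ k : ℕ) : ZMod p), ?_, ?_⟩
      · -- membership in T
        have htval : (((q.1.val / p ^ k : ℕ) : ZMod p)).val = q.1.val / p ^ k := by
          apply ZMod.val_cast_of_lt
          rw [Nat.div_lt_iff_lt_mul hpkpos]
          calc q.1.val < p ^ (k + 1) := ZMod.val_lt q.1
            _ = p * p ^ k := by ring
        rw [hT, Set.mem_setOf_eq, htval, Nat.mul_div_cancel' hdvd, ZMod.natCast_val,
          ZMod.cast_id]
        exact hsq1
      · -- f t = (q1, q2)
        have htval : (((q.1.val / p ^ k : ℕ) : ZMod p)).val = q.1.val / p ^ k := by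
          apply ZMod.val_cast_of_lt
          rw [Nat.div_lt_iff_lt_mul hpkpos]
          calc q.1.val < p ^ (k + 1) := ZMod.val_lt q.1
            _ = p * p ^ k := by ring
        rw [hf]
        simp only [htval, Nat.mul_div_cancel' hdvd]
        rw [ZMod.natCast_val, ZMod.cast_id]
        exact Prod.ext rfl heq
    · rintro ⟨t, ht, rfl⟩
      have hq1sq : IsSquare (((p ^ k * t.val : ℕ) : ZMod (p ^ (k + 1)))) := ht
      have hpdvd : (p : ℤ) ^ k ∣ ((p ^ k * t.val : ℕ) : ℤ) := by
        push_cast; exact Dvd.intro _ rfl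
      have hq2sq : IsSquare ((n : ZMod (p ^ (k + 1)))
          + ((p ^ k * t.val : ℕ) : ZMod (p ^ (k + 1)))) := by
        have hrw : (n : ZMod (p ^ (k + 1))) + ((p ^ k * t.val : ℕ) : ZMod (p ^ (k + 1)))
            = ((n + (p ^ k * t.val : ℕ) : ℤ) : ZMod (p ^ (k + 1))) := by push_cast; ring
        rw [hrw, isSquare_intCast_iff]
        have hN : ¬ (p : ℤ) ∣ (n + (p ^ k * t.val : ℕ) : ℤ) := by
          intro hd
          apply hpn
          have h1 : (p : ℤ) ∣ ((p ^ k * t.val : ℕ) : ℤ) :=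
            (dvd_pow_self (p : ℤ) (by omega : k ≠ 0)).trans hpdvd
          have : (n : ℤ) = (n + (p ^ k * t.val : ℕ) : ℤ) - ((p ^ k * t.val : ℕ) : ℤ) := by ring
          rw [this]; exact dvd_sub hd h1
        have hmod : (p : ℤ) ^ k ∣ (n + (p ^ k * t.val : ℕ) : ℤ) - s0 ^ 2 := by
          have : (n + (p ^ k * t.val : ℕ) : ℤ) - s0 ^ 2
              = (n - s0 ^ 2) + ((p ^ k * t.val : ℕ) : ℤ) := by ring
          rw [this]; exact dvd_add hs0 hpdvd
        obtain ⟨s', hs'⟩ := sq_lift p hp hodd k hk _ hN s0 hmod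
        exact ⟨s', by rw [Nat.cast_pow]; exact hs'⟩
      refine ⟨⟨hq1sq, hq2sq, rfl⟩, ?_, ?_⟩
      · rw [ZMod.castHom_apply, ZMod.cast_natCast (pow_dvd_pow p k.le_succ)]
        rw [ZMod.natCast_eq_zero_iff]
        exact Dvd.intro _ rfl
      · rw [map_add, ZMod.castHom_apply, ZMod.castHom_apply,
          ZMod.cast_natCast (pow_dvd_pow p k.le_succ), ZMod.cast_intCast (pow_dvd_pow p k.le_succ)]
        rw [(ZMod.natCast_eq_zero_iff _ _).mpr ⟨t.val, rfl⟩, add_zero, hbn]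
  rw [hset, Set.ncard_image_of_injective _ hfinj]
  constructor
  · -- even case
    rintro ⟨j, hj⟩
    have hTeq : T = {t : ZMod p | IsSquare t} := by
      ext t
      rw [hT]
      simp only [Set.mem_setOf_eq]
      constructor
      · intro hsq
        by_cases hdt : p ∣ t.val
        · have : t = 0 := by
            have := ZMod.val_lt t
            have hv0 : t.val = 0 := by
              rcases Nat.eq_zero_or_pos t.val with h | h
              · exact h
              · exact absurd (Nat.le_of_dvd h hdt) (by omega)
            exact (ZMod.val_eq_zero t).mp hv0
          rw [this]; exact ⟨0, by ring⟩
        · have : IsSquare (((p ^ k * t.val : ℕ) : ℤ) : ZMod (p ^ (k + 1))) := by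
            rwa [Int.cast_natCast]
          obtain ⟨s, hs⟩ := (isSquare_intCast_iff _ _).mp this
          rw [Nat.cast_pow] at hs
          have hs2 : (p : ℤ) ^ (k + 1) ∣ (p : ℤ) ^ k * (t.val : ℕ) - s ^ 2 := by
            have : ((p ^ k * t.val : ℕ) : ℤ) = (p : ℤ) ^ k * (t.val : ℕ) := by push_cast; ring
            rwa [this] at hs
          obtain ⟨j', w, _, hw⟩ := core_val p hp k t.val hdt s hs2
          refine ⟨(w : ZMod p), ?_⟩
          have h0 : (((t.val : ℤ) - (w : ℤ) ^ 2 : ℤ) : ZMod p) = 0 :=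
            (ZMod.intCast_zmod_eq_zero_iff_dvd _ _).mpr hw
          push_cast at h0
          rw [ZMod.natCast_val, ZMod.cast_id] at h0
          linear_combination h0
      · rintro ⟨r, hr⟩
        have hdvd : (p : ℤ) ∣ (t.val : ℤ) - (r.val : ℤ) ^ 2 := by
          rw [← ZMod.intCast_zmod_eq_zero_iff_dvd]
          push_cast
          rw [ZMod.natCast_val, ZMod.cast_id, ZMod.natCast_val, ZMod.cast_id]
          linear_combination hr
        rw [← Int.cast_natCast, isSquare_intCast_iff]
        refine ⟨(p : ℤ) ^ j * (r.val : ℤ), ?_⟩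
        rw [Nat.cast_pow]
        have heq2 : ((p ^ k * t.val : ℕ) : ℤ) - ((p : ℤ) ^ j * (r.val : ℤ)) ^ 2
            = (p : ℤ) ^ (2 * j) * ((t.val : ℤ) - (r.val : ℤ) ^ 2) := by
          push_cast
          rw [hj, two_mul]
          ring
        rw [heq2, two_mul, ← hj, pow_succ]
        exact mul_dvd_mul_left _ hdvd
    rw [hTeq]
    exact card_squares p hodd
  · -- odd case
    intro hko
    have hTeq : T = {0} := by
      ext t
      rw [hT]
      simp only [Set.mem_setOf_eq, Set.mem_singleton_iff]
      constructor
      · intro hsq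
        by_contra ht0
        have hdt : ¬ p ∣ t.val := by
          intro hdt
          apply ht0
          have hv0 : t.val = 0 := by
            have := ZMod.val_lt t
            rcases Nat.eq_zero_or_pos t.val with h | h
            · exact h
            · exact absurd (Nat.le_of_dvd h hdt) (by omega)
          exact (ZMod.val_eq_zero t).mp hv0
        have : IsSquare (((p ^ k * t.val : ℕ) : ℤ) : ZMod (p ^ (k + 1))) := by
          rwa [Int.cast_natCast]
        obtain ⟨s, hs⟩ := (isSquare_intCast_iff _ _).mp this
        rw [Nat.cast_pow] at hs
        have hs2 : (p : ℤ) ^ (k + 1) ∣ (p : ℤ) ^ k * (t.val : ℕ) - s ^ 2 := by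
          have : ((p ^ k * t.val : ℕ) : ℤ) = (p : ℤ) ^ k * (t.val : ℕ) := by push_cast; ring
          rwa [this] at hs
        obtain ⟨j', w, hkj, _⟩ := core_val p hp k t.val hdt s hs2
        rw [hkj] at hko
        exact (Nat.not_odd_iff_even.mpr ⟨j', two_mul j'⟩) hko
      · rintro rfl
        simp only [ZMod.val_zero, Nat.mul_zero, Nat.cast_zero]
        exact ⟨0, by ring⟩
    rw [hTeq, Set.ncard_singleton]
end

section
/- Let p be an odd prime, n an integer with p ∤ n, and k ≥ 1. Then τ(n, p^{k+1}) = (τ(n, p^k) − s_p(n))·p + s_p(n)·(p+1)/2 if k is even, and τ(n, p^{k+1}) = (τ(n, p^k) − s_p(n))·p + s_p(n) if k is odd. -/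
open Set

section Aux

variable (p m j : ℕ) [hp : Fact p.Prime]

/-- the reduction map mod `p` -/
noncomputable abbrev st12red : ZMod (p^(m+1)) →+* ZMod p :=
  ZMod.castHom (dvd_pow_self p (Nat.succ_ne_zero m)) (ZMod p)

lemma st12_pow_neZero : NeZero (p^m) := ⟨pow_ne_zero _ hp.out.ne_zero⟩

lemma st12red_apply (a : ZMod (p^(m+1))) : st12red p m a = (a.val : ZMod p) := by
  haveI := st12_pow_neZero p (m+1)
  rw [ZMod.castHom_apply, ← ZMod.natCast_val]

lemma st12_ncard_fiber (r : ZMod p) :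
    {a : ZMod (p^(m+1)) | st12red p m a = r}.ncard = p ^ m := by
  haveI := st12_pow_neZero p (m+1)
  haveI := st12_pow_neZero p m
  have hppos : 0 < p := hp.out.pos
  set e : ZMod (p^m) → ZMod (p^(m+1)) :=
    fun t => ((r.val + p * t.val : ℕ) : ZMod (p^(m+1))) with he
  have hinj : Function.Injective e := by
    intro t₁ t₂ h
    rw [he] at h
    simp only [ZMod.natCast_eq_natCast_iff] at h
    have h2 := (Nat.ModEq.add_left_cancel' r.val h)
    have h3 : p * (t₁.val % p ^ m) = p * (t₂.val % p ^ m) := by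
      have := h2
      unfold Nat.ModEq at this
      rwa [pow_succ, mul_comm (p^m) p, Nat.mul_mod_mul_left, Nat.mul_mod_mul_left] at this
    have h4 := Nat.eq_of_mul_eq_mul_left hppos h3
    rw [Nat.mod_eq_of_lt (ZMod.val_lt _), Nat.mod_eq_of_lt (ZMod.val_lt _)] at h4
    exact ZMod.val_injective _ h4
  have himg : e '' univ = {a : ZMod (p^(m+1)) | st12red p m a = r} := by
    ext a
    simp only [image_univ, mem_range, mem_setOf_eq]
    constructor
    · rintro ⟨t, rfl⟩
      rw [he]
      simp only [st12red_apply, ZMod.val_natCast]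
      have hme : ((r.val + p * t.val) % p ^ (m+1)) ≡ r.val [MOD p] := by
        calc (r.val + p * t.val) % p ^ (m+1) ≡ r.val + p * t.val [MOD p] :=
              (Nat.ModEq.of_dvd (dvd_pow_self p (Nat.succ_ne_zero m)) (Nat.mod_modEq _ _))
          _ ≡ r.val + 0 [MOD p] :=
              Nat.ModEq.add_left r.val ((Nat.modEq_zero_iff_dvd).2 ⟨t.val, rfl⟩)
          _ = r.val := by ring_nf
      calc ((((r.val + p * t.val) % p ^ (m+1)) : ℕ) : ZMod p) = ((r.val : ℕ) : ZMod p) :=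
            (ZMod.natCast_eq_natCast_iff _ _ _).2 hme
        _ = r := by rw [ZMod.natCast_val, ZMod.cast_id]
    · intro h
      refine ⟨((a.val / p : ℕ) : ZMod (p^m)), ?_⟩
      have hval : (a.val / p) < p ^ m := by
        rw [Nat.div_lt_iff_lt_mul hppos, ← pow_succ]
        exact ZMod.val_lt a
      have hmod : a.val % p = r.val := by
        rw [st12red_apply] at h
        have : ((a.val : ℕ) : ZMod p) = ((r.val : ℕ) : ZMod p) := by
          rw [h, ZMod.natCast_val, ZMod.cast_id]
        rw [ZMod.natCast_eq_natCast_iff] at this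
        have := this.symm
        unfold Nat.ModEq at this
        rw [Nat.mod_eq_of_lt (ZMod.val_lt r)] at this
        exact this.symm
      rw [he]
      simp only
      rw [ZMod.val_natCast, Nat.mod_eq_of_lt hval, ← hmod, Nat.mod_add_div a.val p]
      rw [ZMod.natCast_val, ZMod.cast_id]
  rw [← himg, ncard_image_of_injective _ hinj, ncard_univ, Nat.card_eq_fintype_card,
    ZMod.card]

lemma st12_ncard_preimage (T : Set (ZMod p)) :
    {a : ZMod (p^(m+1)) | st12red p m a ∈ T}.ncard = T.ncard * p ^ m := by
  classical
  haveI := st12_pow_neZero p (m+1)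
  rw [ncard_eq_toFinset_card', ncard_eq_toFinset_card']
  rw [Finset.card_eq_sum_card_fiberwise
    (f := st12red p m) (t := T.toFinset)
    (fun x hx => by have h := Set.mem_toFinset.1 (Finset.mem_coe.1 hx); simpa using (h : st12red p m x ∈ T))]
  rw [Finset.sum_congr rfl (fun r hr => ?_), Finset.sum_const, smul_eq_mul]
  have : ({a : ZMod (p^(m+1)) | st12red p m a = r} : Set _).toFinset
      = Finset.filter (fun a => st12red p m a = r)
          (Set.toFinset {a | st12red p m a ∈ T}) := by
    ext a
    simp only [Set.mem_toFinset, mem_setOf_eq, Finset.mem_filter]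
    exact ⟨fun h => ⟨by rw [h]; simpa using hr, h⟩, fun h => h.2⟩
  rw [← this, ← ncard_eq_toFinset_card', st12_ncard_fiber]

lemma st12_isSquare_unit_iff {M : Type*} [CommMonoid M] (u : Mˣ) :
    IsSquare (u : M) ↔ IsSquare u := by
  constructor
  · rintro ⟨x, hx⟩
    have hxu : IsUnit x := isUnit_of_mul_isUnit_left (hx ▸ u.isUnit)
    obtain ⟨v, rfl⟩ := hxu
    exact ⟨v, Units.ext (by exact_mod_cast hx)⟩
  · rintro ⟨v, hv⟩
    exact ⟨v, by rw [hv]; rfl⟩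

lemma st12_card_ker_unitsMap :
    Nat.card (MonoidHom.ker (ZMod.unitsMap (dvd_pow_self p (Nat.succ_ne_zero m)))) = p ^ m := by
  haveI := st12_pow_neZero p (m+1)
  haveI : NeZero p := ⟨hp.out.ne_zero⟩
  set f := ZMod.unitsMap (dvd_pow_self p (Nat.succ_ne_zero m))
  have hsurj : Function.Surjective f := ZMod.unitsMap_surjective _
  have e := QuotientGroup.quotientKerEquivOfSurjective f hsurj
  have h1 : Nat.card (ZMod (p^(m+1)))ˣ = Nat.card (ZMod p)ˣ * Nat.card f.ker := by
    rw [Subgroup.card_eq_card_quotient_mul_card_subgroup f.ker, Nat.card_congr e.toEquiv]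
  have h2 : Nat.card (ZMod (p^(m+1)))ˣ = p ^ m * (p - 1) := by
    rw [Nat.card_eq_fintype_card, ZMod.card_units_eq_totient,
      Nat.totient_prime_pow hp.out (Nat.succ_pos m)]
    simp
  have h3 : Nat.card (ZMod p)ˣ = p - 1 := by
    rw [Nat.card_eq_fintype_card, ZMod.card_units_eq_totient, Nat.totient_prime hp.out]
  rw [h2, h3] at h1
  have hp1 : 0 < p - 1 := Nat.sub_pos_of_lt hp.out.one_lt
  exact (Nat.eq_of_mul_eq_mul_left hp1 (by linarith [h1] )).symm

lemma st12_hensel_units (hodd : p ≠ 2) (u : (ZMod (p^(m+1)))ˣ) :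
    IsSquare u ↔ IsSquare (ZMod.unitsMap (dvd_pow_self p (Nat.succ_ne_zero m)) u) := by
  set f := ZMod.unitsMap (dvd_pow_self p (Nat.succ_ne_zero m)) with hf
  constructor
  · exact fun h => h.map f
  · rintro ⟨w, hw⟩
    obtain ⟨v, hv⟩ := ZMod.unitsMap_surjective (dvd_pow_self p (Nat.succ_ne_zero m)) w
    set x := u * (v * v)⁻¹ with hx
    have hker : x ∈ f.ker := by
      rw [MonoidHom.mem_ker, hx, map_mul, map_inv, map_mul, hv, ← hw]
      group
    have hxpow : x ^ (p ^ m) = 1 := by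
      have := pow_card_eq_one' (G := f.ker) (x := ⟨x, hker⟩)
      rw [st12_card_ker_unitsMap p m] at this
      exact_mod_cast congrArg (Subgroup.subtype f.ker) this
    obtain ⟨t, ht⟩ := (hp.out.odd_of_ne_two hodd).pow (n := m)
    refine ⟨x ^ (t+1) * v, ?_⟩
    have hxx : x ^ (t + 1) * x ^ (t + 1) = x := by
      rw [← pow_add]
      have h5 : t + 1 + (t + 1) = p ^ m + 1 := by omega
      have h6 : x ^ (p ^ m + 1) = x ^ (p ^ m) * x := pow_succ x _
      rw [h5, h6, hxpow, one_mul]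
    calc u = x * (v * v) := by rw [hx]; group
      _ = (x ^ (t+1) * v) * (x ^ (t+1) * v) := by
        conv_rhs => rw [mul_mul_mul_comm, hxx]

lemma st12red_eq_zero_iff (a : ZMod (p^(m+1))) : st12red p m a = 0 ↔ p ∣ a.val := by
  rw [st12red_apply, ZMod.natCast_eq_zero_iff]

lemma st12_isUnit_iff_red (a : ZMod (p^(m+1))) : IsUnit a ↔ st12red p m a ≠ 0 := by
  haveI := st12_pow_neZero p (m+1)
  rw [ne_eq, st12red_eq_zero_iff]
  constructor
  · intro ha hdvd
    have h1 : a = ((a.val : ℕ) : ZMod (p^(m+1))) := by rw [ZMod.natCast_val, ZMod.cast_id]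
    rw [h1, ZMod.isUnit_iff_coprime] at ha
    have hdvd2 : p ∣ Nat.gcd a.val (p^(m+1)) :=
      Nat.dvd_gcd hdvd (dvd_pow_self p (Nat.succ_ne_zero m))
    rw [Nat.Coprime] at ha
    rw [ha] at hdvd2
    exact Nat.Prime.not_dvd_one hp.out hdvd2
  · intro hnd
    have h1 : a = ((a.val : ℕ) : ZMod (p^(m+1))) := by rw [ZMod.natCast_val, ZMod.cast_id]
    rw [h1, ZMod.isUnit_iff_coprime]
    have : a.val.Coprime p := (Nat.Prime.coprime_iff_not_dvd hp.out).mpr hnd |>.symm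
    exact Nat.Coprime.pow_right _ this

lemma st12_hensel (hodd : p ≠ 2) (a : ZMod (p^(m+1))) (ha : IsUnit a) :
    IsSquare a ↔ IsSquare (st12red p m a) := by
  obtain ⟨u, rfl⟩ := ha
  have hcoe : st12red p m (u : ZMod (p^(m+1)))
      = ((ZMod.unitsMap (dvd_pow_self p (Nat.succ_ne_zero m)) u : (ZMod p)ˣ) : ZMod p) := rfl
  rw [hcoe, st12_isSquare_unit_iff, st12_isSquare_unit_iff]
  exact st12_hensel_units p m hodd u

/-- number of nonzero squares mod p -/
noncomputable def st12e : ℕ := {r : ZMod p | r ≠ 0 ∧ IsSquare r}.ncard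

lemma st12e_spec (hodd : p ≠ 2) : st12e p * 2 + 1 = p := by
  classical
  haveI : NeZero p := ⟨hp.out.ne_zero⟩
  have hchar : ringChar (ZMod p) ≠ 2 := by
    rw [ZMod.ringChar_zmod_n]; exact hodd
  have hfib : ∀ a : ZMod p, (Finset.univ.filter fun x : ZMod p => x ^ 2 = a).card
      = if a ≠ 0 ∧ IsSquare a then 2 else if a = 0 then 1 else 0 := by
    intro a
    have hq := quadraticChar_card_sqrts hchar a
    have hset : ({x : ZMod p | x ^ 2 = a}.toFinset)
        = Finset.univ.filter fun x : ZMod p => x ^ 2 = a := by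
      ext x; simp
    rw [hset] at hq
    by_cases h0 : a = 0
    · subst h0
      rw [MulChar.map_zero] at hq
      simp only [ne_eq, not_true_eq_false, false_and, if_false, if_pos rfl]
      simp only [zero_add] at hq
      exact_mod_cast hq
    · by_cases hsq : IsSquare a
      · rw [(quadraticChar_one_iff_isSquare h0).mpr hsq] at hq
        rw [if_pos ⟨h0, hsq⟩]
        omega
      · rw [quadraticChar_neg_one_iff_not_isSquare.mpr hsq] at hq
        rw [if_neg (by tauto), if_neg h0]
        omega
  have hcard : Fintype.card (ZMod p)
      = ∑ a : ZMod p, (Finset.univ.filter fun x : ZMod p => x ^ 2 = a).card :=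
    Finset.card_eq_sum_card_fiberwise (fun x _ => Finset.mem_univ _)
  rw [ZMod.card] at hcard
  have hsum : ∑ a : ZMod p, (Finset.univ.filter fun x : ZMod p => x ^ 2 = a).card
      = ∑ a : ZMod p,
        ((if a ∈ (Finset.univ.filter fun r : ZMod p => r ≠ 0 ∧ IsSquare r) then 2 else 0)
          + if a = 0 then 1 else 0) := by
    refine Finset.sum_congr rfl fun a _ => ?_
    rw [hfib a]
    by_cases h0 : a = 0 <;> by_cases hsq : IsSquare a <;>
      simp [Finset.mem_filter, h0, hsq]
  rw [hsum, Finset.sum_add_distrib] at hcard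
  rw [Finset.sum_ite_mem, Finset.univ_inter, Finset.sum_const,
    Finset.sum_ite_eq' Finset.univ (0 : ZMod p)] at hcard
  simp only [Finset.mem_univ, if_pos, smul_eq_mul] at hcard
  have hT : st12e p
      = (Finset.univ.filter fun r : ZMod p => r ≠ 0 ∧ IsSquare r).card := by
    rw [st12e, ncard_eq_toFinset_card']
    congr 1
    ext r; simp
  rw [hT]
  omega

lemma st12_sq_shift :
    {a : ZMod (p^(j+2)) | IsSquare a ∧ p ∣ a.val}.ncard
      = {t : ZMod (p^j) | IsSquare t}.ncard := by
  haveI h1 : NeZero (p^(j+2)) := ⟨pow_ne_zero _ hp.out.ne_zero⟩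
  haveI h2 : NeZero (p^j) := ⟨pow_ne_zero _ hp.out.ne_zero⟩
  have hsplit : p ^ (j+2) = p^2 * p^j := by ring
  set g : ZMod (p^j) → ZMod (p^(j+2)) :=
    fun t => ((p^2 * t.val : ℕ) : ZMod (p^(j+2))) with hg
  have hinj : Function.Injective g := by
    intro t₁ t₂ h
    rw [hg] at h
    simp only [ZMod.natCast_eq_natCast_iff] at h
    have h3 : p^2 * (t₁.val % p ^ j) = p^2 * (t₂.val % p ^ j) := by
      unfold Nat.ModEq at h
      rwa [hsplit, Nat.mul_mod_mul_left, Nat.mul_mod_mul_left] at h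
    have h4 := Nat.eq_of_mul_eq_mul_left (pow_pos hp.out.pos 2) h3
    rw [Nat.mod_eq_of_lt (ZMod.val_lt _), Nat.mod_eq_of_lt (ZMod.val_lt _)] at h4
    exact ZMod.val_injective _ h4
  have himg : g '' {t : ZMod (p^j) | IsSquare t}
      = {a : ZMod (p^(j+2)) | IsSquare a ∧ p ∣ a.val} := by
    ext a
    simp only [mem_image, mem_setOf_eq]
    constructor
    · rintro ⟨t, ⟨w, rfl⟩, rfl⟩
      constructor
      · have hw : w * w = ((w.val * w.val : ℕ) : ZMod (p^j)) := by
          push_cast [ZMod.natCast_val, ZMod.cast_id]; ring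
        have hme : p^2 * ((w * w).val) ≡ p^2 * (w.val * w.val) [MOD p^(j+2)] := by
          rw [hsplit]
          apply Nat.ModEq.mul_left'
          rw [hw, ZMod.val_natCast]
          exact Nat.mod_modEq _ _
        refine ⟨((p * w.val : ℕ) : ZMod (p^(j+2))), ?_⟩
        rw [hg]
        simp only
        rw [(ZMod.natCast_eq_natCast_iff _ _ _).2 hme]
        push_cast
        ring
      · rw [hg]
        simp only [ZMod.val_natCast]
        exact (Nat.dvd_mod_iff (dvd_pow_self p (by omega))).2
          ⟨p * (w * w).val, by ring⟩
    · rintro ⟨⟨x, rfl⟩, hdvd⟩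
      have hxx : x * x = ((x.val * x.val : ℕ) : ZMod (p^(j+2))) := by
        push_cast [ZMod.natCast_val, ZMod.cast_id]; ring
      have hdvd2 : p ∣ x.val * x.val := by
        rw [hxx, ZMod.val_natCast] at hdvd
        exact (Nat.dvd_mod_iff (dvd_pow_self p (by omega))).1 hdvd
      have hdx : p ∣ x.val := (Nat.Prime.dvd_mul hp.out).1 hdvd2 |>.elim id id
      obtain ⟨y, hy⟩ := hdx
      refine ⟨((y * y : ℕ) : ZMod (p^j)), ⟨((y:ℕ) : ZMod (p^j)), by push_cast; ring⟩, ?_⟩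
      rw [hg]
      simp only [ZMod.val_natCast]
      have hme : p^2 * ((y * y) % p^j) ≡ p^2 * (y * y) [MOD p^(j+2)] := by
        rw [hsplit]
        exact (Nat.mod_modEq _ _).mul_left' _
      rw [(ZMod.natCast_eq_natCast_iff _ _ _).2 hme, hxx]
      congr 1
      rw [hy]; ring
  rw [← himg, ncard_image_of_injective _ hinj]

/-- number of squares mod `p^(m+1)` that are divisible by `p` -/
noncomputable def st12s0 : ℕ :=
  {a : ZMod (p^(m+1)) | IsSquare a ∧ st12red p m a = 0}.ncard

lemma st12s0_zero : st12s0 p 0 = 1 := by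
  haveI := st12_pow_neZero p 1
  rw [st12s0]
  have : {a : ZMod (p^(0+1)) | IsSquare a ∧ st12red p 0 a = 0} = {0} := by
    ext a
    simp only [mem_setOf_eq, mem_singleton_iff]
    constructor
    · rintro ⟨-, h0⟩
      rw [st12red_eq_zero_iff] at h0
      have hlt : a.val < p := by
        have := ZMod.val_lt a
        simpa using this
      have hv0 : a.val = 0 := Nat.eq_zero_of_dvd_of_lt h0 hlt
      exact (ZMod.val_eq_zero a).1 hv0
    · rintro rfl
      exact ⟨⟨0, (mul_zero 0).symm⟩, map_zero _⟩
  rw [this, ncard_singleton]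

lemma st12s0_succ : st12s0 p (j+1) = {t : ZMod (p^j) | IsSquare t}.ncard := by
  rw [st12s0, ← st12_sq_shift p j]
  congr 1
  ext a
  simp only [mem_setOf_eq]
  rw [st12red_eq_zero_iff]

lemma st12_sq_zero : {t : ZMod (p^0) | IsSquare t}.ncard = 1 := by
  haveI : NeZero (p^0) := ⟨by simp⟩
  have : {t : ZMod (p^0) | IsSquare t} = univ := by
    ext t
    simp only [mem_setOf_eq, mem_univ, iff_true]
    haveI : Subsingleton (ZMod (p^0)) := by rw [pow_zero]; infer_instance
    exact ⟨0, Subsingleton.elim _ _⟩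
  rw [this, ncard_univ, Nat.card_eq_fintype_card, ZMod.card, pow_zero]

lemma st12_sq_split (hodd : p ≠ 2) :
    {t : ZMod (p^(m+1)) | IsSquare t}.ncard = st12s0 p m + st12e p * p ^ m := by
  classical
  have hdisj : Disjoint {a : ZMod (p^(m+1)) | IsSquare a ∧ st12red p m a = 0}
      {a : ZMod (p^(m+1)) | IsSquare a ∧ st12red p m a ≠ 0} := by
    rw [Set.disjoint_left]
    rintro a ⟨-, h0⟩ ⟨-, hne⟩
    exact hne h0
  have hunion : {t : ZMod (p^(m+1)) | IsSquare t}
      = {a : ZMod (p^(m+1)) | IsSquare a ∧ st12red p m a = 0}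
        ∪ {a : ZMod (p^(m+1)) | IsSquare a ∧ st12red p m a ≠ 0} := by
    ext a
    simp only [mem_setOf_eq, mem_union]
    by_cases h : st12red p m a = 0 <;> tauto
  rw [hunion, ncard_union_eq hdisj (toFinite _) (toFinite _)]
  congr 1
  have : {a : ZMod (p^(m+1)) | IsSquare a ∧ st12red p m a ≠ 0}
      = {a : ZMod (p^(m+1)) | st12red p m a ∈ {r : ZMod p | r ≠ 0 ∧ IsSquare r}} := by
    ext a
    simp only [mem_setOf_eq]
    constructor
    · rintro ⟨hsq, hne⟩
      exact ⟨hne, (st12_hensel p m hodd a ((st12_isUnit_iff_red p m a).2 hne)).1 hsq⟩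
    · rintro ⟨hne, hsq⟩
      exact ⟨(st12_hensel p m hodd a ((st12_isUnit_iff_red p m a).2 hne)).2 hsq, hne⟩
  rw [this, st12_ncard_preimage]
  rfl

lemma st12_tau_eq (n : ℤ) (c : ℕ) :
    tau n c = {a : ZMod c | IsSquare a ∧ IsSquare ((n : ZMod c) + a)}.ncard := by
  rw [tau]
  have himg : {ab : ZMod c × ZMod c | IsTarget n c ab.1 ab.2}
      = (fun a => (a, (n : ZMod c) + a)) ''
          {a | IsSquare a ∧ IsSquare ((n : ZMod c) + a)} := by
    ext ⟨x, y⟩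
    simp only [mem_setOf_eq, mem_image, IsTarget, Prod.mk.injEq]
    constructor
    · rintro ⟨h1, h2, h3⟩
      exact ⟨x, ⟨h1, by rwa [h3]⟩, rfl, h3⟩
    · rintro ⟨a, ⟨h1, h2⟩, rfl, rfl⟩
      exact ⟨h1, h2, rfl⟩
  rw [himg, ncard_image_of_injective]
  exact fun a b h => congrArg Prod.fst h

lemma st12_tau_formula (hodd : p ≠ 2) (n : ℤ) (hn : ¬ (p:ℤ) ∣ n) :
    tau n (p^(m+1))
      = {r : ZMod p | r ≠ 0 ∧ IsSquare r ∧ (n : ZMod p) + r ≠ 0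
            ∧ IsSquare ((n : ZMod p) + r)}.ncard * p^m
        + ((if IsSquare ((n : ZMod p)) then st12s0 p m else 0)
        + (if IsSquare (-(n : ZMod p)) then st12s0 p m else 0)) := by
  classical
  have hn0 : (n : ZMod p) ≠ 0 := fun h => hn ((ZMod.intCast_zmod_eq_zero_iff_dvd n p).1 h)
  have hredn : ∀ a : ZMod (p^(m+1)),
      st12red p m ((n : ZMod (p^(m+1))) + a) = (n : ZMod p) + st12red p m a := by
    intro a
    rw [map_add, map_intCast]
  set A1 : Set (ZMod (p^(m+1))) :=
    {a | (IsSquare a ∧ IsSquare ((n : ZMod (p^(m+1))) + a)) ∧ st12red p m a = 0} with hA1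
  set A2 : Set (ZMod (p^(m+1))) :=
    {a | (IsSquare a ∧ IsSquare ((n : ZMod (p^(m+1))) + a)) ∧ st12red p m a ≠ 0
          ∧ (n : ZMod p) + st12red p m a = 0} with hA2
  set A3 : Set (ZMod (p^(m+1))) :=
    {a | (IsSquare a ∧ IsSquare ((n : ZMod (p^(m+1))) + a)) ∧ st12red p m a ≠ 0
          ∧ (n : ZMod p) + st12red p m a ≠ 0} with hA3
  have hunion : {a : ZMod (p^(m+1)) | IsSquare a ∧ IsSquare ((n : ZMod (p^(m+1))) + a)}
      = A3 ∪ (A1 ∪ A2) := by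
    ext a
    simp only [hA1, hA2, hA3, mem_setOf_eq, mem_union]
    by_cases h1 : st12red p m a = 0 <;> by_cases h2 : (n : ZMod p) + st12red p m a = 0 <;> tauto
  have hd1 : Disjoint A1 A2 := by
    rw [Set.disjoint_left]
    rintro a ⟨-, h0⟩ ⟨-, hne, -⟩
    exact hne h0
  have hd2 : Disjoint A3 (A1 ∪ A2) := by
    rw [Set.disjoint_left]
    rintro a ⟨-, hne, hnne⟩ (⟨-, h0⟩ | ⟨-, -, h0⟩)
    · exact hne h0
    · exact hnne h0
  rw [st12_tau_eq, hunion, ncard_union_eq hd2 (toFinite _) (toFinite _),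
    ncard_union_eq hd1 (toFinite _) (toFinite _)]
  have hc3 : A3.ncard = {r : ZMod p | r ≠ 0 ∧ IsSquare r ∧ (n : ZMod p) + r ≠ 0
      ∧ IsSquare ((n : ZMod p) + r)}.ncard * p^m := by
    rw [← st12_ncard_preimage]
    congr 1
    ext a
    simp only [hA3, mem_setOf_eq]
    constructor
    · rintro ⟨⟨hsa, hsna⟩, hne, hnne⟩
      refine ⟨hne, (st12_hensel p m hodd a ((st12_isUnit_iff_red p m a).2 hne)).1 hsa, hnne, ?_⟩
      have := (st12_hensel p m hodd _ ((st12_isUnit_iff_red p m _).2 (by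
        rw [hredn]; exact hnne))).1 hsna
      rwa [hredn] at this
    · rintro ⟨hne, hsr, hnne, hsnr⟩
      refine ⟨⟨(st12_hensel p m hodd a ((st12_isUnit_iff_red p m a).2 hne)).2 hsr, ?_⟩, hne, hnne⟩
      refine (st12_hensel p m hodd _ ((st12_isUnit_iff_red p m _).2 (by
        rw [hredn]; exact hnne))).2 ?_
      rwa [hredn]
  have hc1 : A1.ncard = if IsSquare ((n : ZMod p)) then st12s0 p m else 0 := by
    by_cases hsq : IsSquare ((n : ZMod p))
    · rw [if_pos hsq]
      rw [st12s0]
      congr 1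
      ext a
      simp only [hA1, mem_setOf_eq]
      constructor
      · rintro ⟨⟨hsa, -⟩, h0⟩
        exact ⟨hsa, h0⟩
      · rintro ⟨hsa, h0⟩
        refine ⟨⟨hsa, ?_⟩, h0⟩
        have hu : IsUnit ((n : ZMod (p^(m+1))) + a) := by
          rw [st12_isUnit_iff_red, hredn, h0, add_zero]
          exact hn0
        refine (st12_hensel p m hodd _ hu).2 ?_
        rw [hredn, h0, add_zero]
        exact hsq
    · rw [if_neg hsq]
      have : A1 = ∅ := by
        ext a
        simp only [hA1, mem_setOf_eq, mem_empty_iff_false, iff_false, not_and]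
        rintro ⟨-, hsna⟩ h0
        apply hsq
        have hu : IsUnit ((n : ZMod (p^(m+1))) + a) := by
          rw [st12_isUnit_iff_red, hredn, h0, add_zero]
          exact hn0
        have := (st12_hensel p m hodd _ hu).1 hsna
        rwa [hredn, h0, add_zero] at this
      rw [this, ncard_empty]
  have hc2 : A2.ncard = if IsSquare (-(n : ZMod p)) then st12s0 p m else 0 := by
    by_cases hsq : IsSquare (-(n : ZMod p))
    · rw [if_pos hsq, st12s0]
      have himg : A2 = (fun b => b - (n : ZMod (p^(m+1)))) ''
          {b : ZMod (p^(m+1)) | IsSquare b ∧ st12red p m b = 0} := by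
        ext a
        simp only [hA2, mem_setOf_eq, mem_image]
        constructor
        · rintro ⟨⟨hsa, hsna⟩, hne, hzero⟩
          exact ⟨(n : ZMod (p^(m+1))) + a, ⟨hsna, by rw [hredn]; exact hzero⟩, by ring⟩
        · rintro ⟨b, ⟨hsb, hb0⟩, rfl⟩
          have hr : st12red p m (b - (n : ZMod (p^(m+1)))) = -(n : ZMod p) := by
            rw [map_sub, map_intCast, hb0, zero_sub]
          have hne : st12red p m (b - (n : ZMod (p^(m+1)))) ≠ 0 := by
            rw [hr]
            exact neg_ne_zero.2 hn0
          refine ⟨⟨?_, ?_⟩, hne, by rw [hr]; ring⟩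
          · refine (st12_hensel p m hodd _ ((st12_isUnit_iff_red p m _).2 hne)).2 ?_
            rw [hr]
            exact hsq
          · have : (n : ZMod (p^(m+1))) + (b - (n : ZMod (p^(m+1)))) = b := by ring
            rw [this]
            exact hsb
      rw [himg, ncard_image_of_injective]
      exact sub_left_injective
    · rw [if_neg hsq]
      have : A2 = ∅ := by
        ext a
        simp only [hA2, mem_setOf_eq, mem_empty_iff_false, iff_false, not_and]
        rintro ⟨hsa, -⟩ hne hzero
        apply hsq
        have hr : st12red p m a = -(n : ZMod p) := by
          have := hzero
          linear_combination this
        rw [← hr]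
        exact (st12_hensel p m hodd a ((st12_isUnit_iff_red p m a).2 hne)).1 hsa
      rw [this, ncard_empty]
  rw [hc1, hc2, hc3]

lemma st12_rec (hodd : p ≠ 2) : ∀ m : ℕ,
    st12s0 p (m+1) + p = p * st12s0 p m + (if Even (m+1) then st12e p + 1 else 1) := by
  intro m
  induction m using Nat.strong_induction_on with
  | _ m ih =>
    match m with
    | 0 =>
      rw [st12s0_succ, st12_sq_zero, st12s0_zero]
      norm_num
      omega
    | 1 =>
      rw [st12s0_succ, st12_sq_split p 0 hodd, st12s0_zero, st12s0_succ, st12_sq_zero]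
      norm_num
      omega
    | (m+2) =>
      have ih' := ih m (by omega)
      have h1 : st12s0 p (m+3) = st12s0 p (m+1) + st12e p * p^(m+1) := by
        rw [st12s0_succ p (m+2), st12_sq_split p (m+1) hodd]
      have h2 : st12s0 p (m+2) = st12s0 p m + st12e p * p^m := by
        rw [st12s0_succ p (m+1), st12_sq_split p m hodd]
      have hpar : Even (m+3) ↔ Even (m+1) := by simp [Nat.even_add_one]
      rw [h1, h2]
      by_cases he : Even (m+1)
      · rw [if_pos (hpar.2 he)]
        rw [if_pos he] at ih'
        zify at ih' ⊢
        linear_combination ih'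
      · rw [if_neg (fun h => he (hpar.1 h))]
        rw [if_neg he] at ih'
        zify at ih' ⊢
        linear_combination ih'


end Aux

theorem stmt_12 (p : ℕ) [Fact p.Prime] (hodd : p ≠ 2) (n : ℤ)
    (hn : ¬ (p : ℤ) ∣ n) (k : ℕ) (hk : 1 ≤ k) :
    (Even k →
      (tau n (p ^ (k + 1)) : ℤ) =
        ((tau n (p ^ k) : ℤ) -
            ((1 + legendreSym p n) / 2 + (1 + legendreSym p (-n)) / 2)) * p +
          ((1 + legendreSym p n) / 2 + (1 + legendreSym p (-n)) / 2) *
            (((p : ℤ) + 1) / 2)) ∧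
    (Odd k →
      (tau n (p ^ (k + 1)) : ℤ) =
        ((tau n (p ^ k) : ℤ) -
            ((1 + legendreSym p n) / 2 + (1 + legendreSym p (-n)) / 2)) * p +
          ((1 + legendreSym p n) / 2 + (1 + legendreSym p (-n)) / 2)) := by
  obtain ⟨m, rfl⟩ : ∃ m, k = m + 1 := ⟨k - 1, by omega⟩
  have hn0 : (n : ZMod p) ≠ 0 := fun h => hn ((ZMod.intCast_zmod_eq_zero_iff_dvd n p).1 h)
  have hnn0 : ((-n : ℤ) : ZMod p) ≠ 0 := by
    push_cast
    exact neg_ne_zero.2 hn0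
  have hcast : ((-n : ℤ) : ZMod p) = -(n : ZMod p) := by push_cast; ring
  have hleg1 : (1 + legendreSym p n) / 2 = (if IsSquare ((n : ZMod p)) then 1 else 0 : ℤ) := by
    by_cases h : IsSquare ((n : ZMod p))
    · rw [if_pos h, (legendreSym.eq_one_iff p hn0).2 h]
      norm_num
    · rw [if_neg h, (legendreSym.eq_neg_one_iff p).2 h]
      norm_num
  have hleg2 : (1 + legendreSym p (-n)) / 2
      = (if IsSquare (-(n : ZMod p)) then 1 else 0 : ℤ) := by
    by_cases h : IsSquare (-(n : ZMod p))
    · rw [if_pos h, (legendreSym.eq_one_iff p hnn0).2 (hcast ▸ h)]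
      norm_num
    · rw [if_neg h, (legendreSym.eq_neg_one_iff p).2 (fun hh => h (hcast ▸ hh))]
      norm_num
  have he2 : st12e p * 2 + 1 = p := st12e_spec p hodd
  have hhalf : ((p:ℤ) + 1) / 2 = (st12e p : ℤ) + 1 := by
    have : ((st12e p : ℤ)) * 2 + 1 = p := by exact_mod_cast he2
    omega
  have hτ1 := st12_tau_formula p m hodd n hn
  have hτ2 := st12_tau_formula p (m+1) hodd n hn
  have hrec := st12_rec p hodd m
  have hrecZ : (st12s0 p (m+1) : ℤ) + p
      = p * st12s0 p m + (if Even (m+1) then (st12e p : ℤ) + 1 else 1) := by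
    by_cases h : Even (m+1)
    · rw [if_pos h] at hrec ⊢
      exact_mod_cast hrec
    · rw [if_neg h] at hrec ⊢
      exact_mod_cast hrec
  constructor
  · intro hev
    rw [if_pos hev] at hrecZ
    rw [hτ1, hτ2, hleg1, hleg2, hhalf]
    push_cast
    by_cases h1 : IsSquare ((n : ZMod p)) <;> by_cases h2 : IsSquare (-(n : ZMod p)) <;>
      simp only [h1, h2, if_true, if_false] <;> push_cast <;>
      [linear_combination (2:ℤ) * hrecZ; linear_combination hrecZ;
       linear_combination hrecZ; ring]
  · intro hodd'
    have : ¬ Even (m+1) := Nat.not_even_iff_odd.2 hodd'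
    rw [if_neg this] at hrecZ
    rw [hτ1, hτ2, hleg1, hleg2]
    push_cast
    by_cases h1 : IsSquare ((n : ZMod p)) <;> by_cases h2 : IsSquare (-(n : ZMod p)) <;>
      simp only [h1, h2, if_true, if_false] <;> push_cast <;>
      [linear_combination (2:ℤ) * hrecZ; linear_combination hrecZ;
       linear_combination hrecZ; ring]
end

section
/- Let p be an odd prime and n an integer with gcd(n,p)=1. Let R̄₁ = {(x,y) ∈ H_{n,p} : y ≤ min(x, p−x)} and let T(n,p) be the set of targets for n modulus p. Then the map γ₁ : R̄₁ → T(n,p) defined by γ₁(x,y) = (4⁻¹·(x−y)², 4⁻¹·(x+y)²), where the expressions are computed in ℤ/pℤ and 4⁻¹ is the inverse of 4 in ℤ/pℤ, is a bijection. -/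
lemma castInj {p : ℕ} {a b : ℤ} (ha : 0 ≤ a) (ha' : a < p) (hb : 0 ≤ b) (hb' : b < p)
    (h : (a : ZMod p) = b) : a = b := by
  have := (ZMod.intCast_eq_intCast_iff' a b p).mp h
  rwa [Int.emod_eq_of_lt ha ha', Int.emod_eq_of_lt hb hb'] at this

lemma valCast {p : ℕ} [NeZero p] (X : ZMod p) : ((X.val : ℤ) : ZMod p) = X := by
  push_cast [ZMod.natCast_val, ZMod.cast_id]; rfl

theorem stmt_14 (p : ℕ) [Fact p.Prime] (hodd : p ≠ 2) (n : ℤ)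
    (hn : Int.gcd n p = 1) :
    Set.BijOn
      (fun q : ℤ × ℤ =>
        ((4 : ZMod p)⁻¹ * ((q.1 : ZMod p) - (q.2 : ZMod p)) ^ 2,
         (4 : ZMod p)⁻¹ * ((q.1 : ZMod p) + (q.2 : ZMod p)) ^ 2))
      {q ∈ Hyp n p | q.2 ≤ min q.1 ((p : ℤ) - q.1)}
      {ab : ZMod p × ZMod p | IsTarget n p ab.1 ab.2} := by
  have hp : p.Prime := Fact.out
  have hp1 : 1 < p := hp.one_lt
  have hnz : (n : ZMod p) ≠ 0 := by
    rw [Ne, ZMod.intCast_zmod_eq_zero_iff_dvd]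
    intro h
    have hcop : IsCoprime n (p : ℤ) := Int.isCoprime_iff_gcd_eq_one.mpr hn
    have : IsUnit ((p : ℤ)) := hcop.isUnit_of_dvd' h dvd_rfl
    rcases Int.isUnit_iff.mp this with h' | h' <;> omega
  have h2 : (2 : ZMod p) ≠ 0 := by
    have : ((2 : ℕ) : ZMod p) ≠ 0 := by
      rw [Ne, ZMod.natCast_eq_zero_iff]
      intro h
      exact hodd ((Nat.prime_dvd_prime_iff_eq hp Nat.prime_two).mp h)
    exact_mod_cast this
  have h4 : (4 : ZMod p) ≠ 0 := by
    have h44 : (4 : ZMod p) = 2 * 2 := by norm_num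
    rw [h44]; exact mul_ne_zero h2 h2
  have mulEq : ∀ x y : ℤ, (p : ℤ) ∣ x * y - n → (x : ZMod p) * (y : ZMod p) = (n : ZMod p) := by
    intro x y h
    have : ((x * y - n : ℤ) : ZMod p) = 0 := by
      rw [ZMod.intCast_zmod_eq_zero_iff_dvd]; exact h
    push_cast at this
    linear_combination this
  have posOf : ∀ x y : ℤ, (x : ZMod p) * (y : ZMod p) = (n : ZMod p) → x ≠ 0 := by
    intro x y h hx
    subst hx
    simp at h
    exact hnz h.symm
  constructor
  · -- MapsTo
    rintro ⟨x, y⟩ ⟨⟨hx0, hxp, hy0, hyp', hdvd⟩, hmin⟩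
    have hxy := mulEq x y hdvd
    have h44 : (4 : ZMod p) * (4 : ZMod p)⁻¹ = 1 := mul_inv_cancel₀ h4
    refine ⟨⟨(2 : ZMod p)⁻¹ * ((x : ZMod p) - y), ?_⟩,
            ⟨(2 : ZMod p)⁻¹ * ((x : ZMod p) + y), ?_⟩, ?_⟩
    · have hinv : (4 : ZMod p)⁻¹ = (2 : ZMod p)⁻¹ * (2 : ZMod p)⁻¹ := by
        rw [← mul_inv]; norm_num
      simp only [hinv]; ring
    · have hinv : (4 : ZMod p)⁻¹ = (2 : ZMod p)⁻¹ * (2 : ZMod p)⁻¹ := by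
        rw [← mul_inv]; norm_num
      simp only [hinv]; ring
    · show (n : ZMod p) + _ = _
      linear_combination -hxy - (x : ZMod p) * (y : ZMod p) * h44
  constructor
  · -- InjOn
    rintro ⟨x1, y1⟩ ⟨⟨hx10, hx1p, hy10, hy1p, hd1⟩, hm1⟩
           ⟨x2, y2⟩ ⟨⟨hx20, hx2p, hy20, hy2p, hd2⟩, hm2⟩ heq
    simp only [Prod.mk.injEq] at heq
    obtain ⟨hA, hB⟩ := heq
    have hmul1 := mulEq x1 y1 hd1
    have hmul2 := mulEq x2 y2 hd2
    have hx1pos : 0 < x1 := lt_of_le_of_ne hx10 (Ne.symm (posOf x1 y1 hmul1))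
    have hy1pos : 0 < y1 := lt_of_le_of_ne hy10 (Ne.symm (posOf y1 x1 (by rw [mul_comm]; exact hmul1)))
    have hx2pos : 0 < x2 := lt_of_le_of_ne hx20 (Ne.symm (posOf x2 y2 hmul2))
    have hy2pos : 0 < y2 := lt_of_le_of_ne hy20 (Ne.symm (posOf y2 x2 (by rw [mul_comm]; exact hmul2)))
    simp only [le_min_iff] at hm1 hm2
    have hA' : ((x1 : ZMod p) - y1) ^ 2 = ((x2 : ZMod p) - y2) ^ 2 :=
      mul_left_cancel₀ (inv_ne_zero h4) hA
    have hB' : ((x1 : ZMod p) + y1) ^ 2 = ((x2 : ZMod p) + y2) ^ 2 :=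
      mul_left_cancel₀ (inv_ne_zero h4) hB
    have hA2 : (((x1 : ZMod p) - y1) - ((x2 : ZMod p) - y2)) *
        (((x1 : ZMod p) - y1) + ((x2 : ZMod p) - y2)) = 0 := by linear_combination hA'
    have hB2 : (((x1 : ZMod p) + y1) - ((x2 : ZMod p) + y2)) *
        (((x1 : ZMod p) + y1) + ((x2 : ZMod p) + y2)) = 0 := by linear_combination hB'
    have hps := ZMod.natCast_self p
    simp only [Prod.mk.injEq]
    rcases mul_eq_zero.mp hA2 with hA3 | hA3 <;> rcases mul_eq_zero.mp hB2 with hB3 | hB3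
    · -- x1=x2, y1=y2
      have e1 : (2 : ZMod p) * (x1 : ZMod p) = 2 * (x2 : ZMod p) := by
        linear_combination hA3 + hB3
      have e2 : (2 : ZMod p) * (y1 : ZMod p) = 2 * (y2 : ZMod p) := by
        linear_combination hB3 - hA3
      have ex := castInj hx10 hx1p hx20 hx2p (mul_left_cancel₀ h2 e1)
      have ey := castInj hy10 hy1p hy20 hy2p (mul_left_cancel₀ h2 e2)
      omega
    · -- x1 = p - y2, y1 = p - x2
      have e1 : (2 : ZMod p) * (x1 : ZMod p) = 2 * (((p : ℤ) - y2 : ℤ) : ZMod p) := by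
        push_cast
        linear_combination hA3 + hB3 - 2 * hps
      have e2 : (2 : ZMod p) * (y1 : ZMod p) = 2 * (((p : ℤ) - x2 : ℤ) : ZMod p) := by
        push_cast
        linear_combination hB3 - hA3 - 2 * hps
      have ex := castInj hx10 hx1p (by omega) (by omega) (mul_left_cancel₀ h2 e1)
      have ey := castInj hy10 hy1p (by omega) (by omega) (mul_left_cancel₀ h2 e2)
      omega
    · -- x1 = y2, y1 = x2
      have e1 : (2 : ZMod p) * (x1 : ZMod p) = 2 * (y2 : ZMod p) := by
        linear_combination hA3 + hB3
      have e2 : (2 : ZMod p) * (y1 : ZMod p) = 2 * (x2 : ZMod p) := by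
        linear_combination hB3 - hA3
      have ex := castInj hx10 hx1p hy20 hy2p (mul_left_cancel₀ h2 e1)
      have ey := castInj hy10 hy1p hx20 hx2p (mul_left_cancel₀ h2 e2)
      omega
    · -- x1 = p - x2, y1 = p - y2
      have e1 : (2 : ZMod p) * (x1 : ZMod p) = 2 * (((p : ℤ) - x2 : ℤ) : ZMod p) := by
        push_cast
        linear_combination hA3 + hB3 - 2 * hps
      have e2 : (2 : ZMod p) * (y1 : ZMod p) = 2 * (((p : ℤ) - y2 : ℤ) : ZMod p) := by
        push_cast
        linear_combination hB3 - hA3 - 2 * hps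
      have ex := castInj hx10 hx1p (by omega) (by omega) (mul_left_cancel₀ h2 e1)
      have ey := castInj hy10 hy1p (by omega) (by omega) (mul_left_cancel₀ h2 e2)
      omega
  · -- SurjOn
    rintro ⟨a, b⟩ ⟨⟨s, hs⟩, ⟨t, ht⟩, hab⟩
    have hXY : (t + s) * (t - s) = (n : ZMod p) := by
      linear_combination hs - ht - hab
    have hX : (t + s) ≠ 0 := fun h => hnz (by rw [← hXY, h, zero_mul])
    have hY : (t - s) ≠ 0 := fun h => hnz (by rw [← hXY, h, mul_zero])
    set x0 : ℤ := (((t + s : ZMod p).val : ℤ)) with hx0def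
    set y0 : ℤ := (((t - s : ZMod p).val : ℤ)) with hy0def
    have hx0 : (x0 : ZMod p) = t + s := valCast _
    have hy0 : (y0 : ZMod p) = t - s := valCast _
    have hx0lt : x0 < p := by rw [hx0def]; exact_mod_cast ZMod.val_lt (t + s)
    have hy0lt : y0 < p := by rw [hy0def]; exact_mod_cast ZMod.val_lt (t - s)
    have hx0pos : 0 < x0 := by
      rw [hx0def]
      exact_mod_cast Nat.pos_of_ne_zero (fun h => hX ((ZMod.val_eq_zero _).mp h))
    have hy0pos : 0 < y0 := by
      rw [hy0def]
      exact_mod_cast Nat.pos_of_ne_zero (fun h => hY ((ZMod.val_eq_zero _).mp h))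
    have hnx0 : (((p : ℤ) - x0 : ℤ) : ZMod p) = -(t + s) := by
      push_cast [ZMod.natCast_self]
      rw [hx0]; ring
    have hny0 : (((p : ℤ) - y0 : ℤ) : ZMod p) = -(t - s) := by
      push_cast [ZMod.natCast_self]
      rw [hy0]; ring
    have key : ∀ x y : ℤ, 0 ≤ x → x < p → 0 ≤ y → y < p → y ≤ x → x + y ≤ p →
        (x : ZMod p) * (y : ZMod p) = (n : ZMod p) →
        ((x : ZMod p) - y) ^ 2 = 4 * a → ((x : ZMod p) + y) ^ 2 = 4 * b →
        (a, b) ∈ (fun q : ℤ × ℤ =>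
          ((4 : ZMod p)⁻¹ * ((q.1 : ZMod p) - (q.2 : ZMod p)) ^ 2,
           (4 : ZMod p)⁻¹ * ((q.1 : ZMod p) + (q.2 : ZMod p)) ^ 2)) ''
          {q ∈ Hyp n p | q.2 ≤ min q.1 ((p : ℤ) - q.1)} := by
      intro x y hx' hxp' hy' hyp' hyx hsum hmul hsa hsb
      refine ⟨(x, y), ⟨⟨hx', hxp', hy', hyp', ?_⟩, ?_⟩, ?_⟩
      · rw [← ZMod.intCast_zmod_eq_zero_iff_dvd]
        push_cast
        linear_combination hmul
      · simp only [le_min_iff]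
        omega
      · simp only [Prod.mk.injEq]
        constructor
        · rw [hsa, ← mul_assoc, inv_mul_cancel₀ h4, one_mul]
        · rw [hsb, ← mul_assoc, inv_mul_cancel₀ h4, one_mul]
    rcases le_or_gt y0 x0 with hyx | hyx <;> rcases le_or_gt (x0 + y0) (p : ℤ) with hsum | hsum
    · exact key x0 y0 (by omega) hx0lt (by omega) hy0lt hyx hsum
        (by rw [hx0, hy0]; exact hXY)
        (by rw [hx0, hy0]; linear_combination (-4 : ZMod p) * hs)
        (by rw [hx0, hy0]; linear_combination (-4 : ZMod p) * ht)
    · exact key ((p : ℤ) - y0) ((p : ℤ) - x0) (by omega) (by omega) (by omega) (by omega)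
        (by omega) (by omega)
        (by rw [hnx0, hny0]; linear_combination hXY)
        (by rw [hnx0, hny0]; linear_combination (-4 : ZMod p) * hs)
        (by rw [hnx0, hny0]; linear_combination (-4 : ZMod p) * ht)
    · exact key y0 x0 (by omega) hy0lt (by omega) hx0lt (by omega) (by omega)
        (by rw [hx0, hy0]; linear_combination hXY)
        (by rw [hx0, hy0]; linear_combination (-4 : ZMod p) * hs)
        (by rw [hx0, hy0]; linear_combination (-4 : ZMod p) * ht)
    · exact key ((p : ℤ) - x0) ((p : ℤ) - y0) (by omega) (by omega) (by omega) (by omega)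
        (by omega) (by omega)
        (by rw [hnx0, hny0]; linear_combination hXY)
        (by rw [hnx0, hny0]; linear_combination (-4 : ZMod p) * hs)
        (by rw [hnx0, hny0]; linear_combination (-4 : ZMod p) * ht)
end

section
/- Let p be an odd prime and n an integer with p ∤ n. If p ≡ 3 (mod 4), or if p ≡ 1 (mod 4) and the Legendre symbol (n/p) = −1, then τ(n,p) ≤ (p+1)/4. -/
theorem stmt_15 (p : ℕ) [Fact p.Prime] (hodd : p ≠ 2) (n : ℤ)
    (hn : ¬ (p : ℤ) ∣ n)
    (h : p % 4 = 3 ∨ (p % 4 = 1 ∧ legendreSym p n = -1)) :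
    (tau n p : ℤ) ≤ ((p : ℤ) + 1) / 4 := by
  classical
  have hp : p.Prime := Fact.out
  have h2 : (2 : ZMod p) ≠ 0 := by
    have : ((2:ℕ) : ZMod p) ≠ 0 := by
      rw [Ne, ZMod.natCast_eq_zero_iff]
      intro hdvd
      exact hodd ((Nat.prime_dvd_prime_iff_eq Fact.out Nat.prime_two).mp hdvd)
    exact_mod_cast this
  have hn0 : (n : ZMod p) ≠ 0 := by
    rw [Ne, ZMod.intCast_zmod_eq_zero_iff_dvd]; exact hn
  -- `n` and `-n` cannot both be squares mod `p`
  have hboth : ¬ (IsSquare ((n : ZMod p)) ∧ IsSquare (-(n : ZMod p))) := by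
    rintro ⟨⟨r, hr⟩, ⟨s, hs⟩⟩
    have hr0 : r ≠ 0 := by
      rintro rfl
      rw [mul_zero] at hr
      exact hn0 hr
    rcases h with h3 | ⟨h1, hleg⟩
    · have hsq : IsSquare (-1 : ZMod p) := by
        refine ⟨s * r⁻¹, ?_⟩
        field_simp
        linear_combination hr + hs
      rw [ZMod.exists_sq_eq_neg_one_iff] at hsq
      exact hsq h3
    · exact (legendreSym.eq_neg_one_iff p).mp hleg ⟨r, hr⟩
  set f : ZMod p → ZMod p × ZMod p :=
    fun u => ((((n : ZMod p) * u⁻¹ - u) / 2) ^ 2, (((n : ZMod p) * u⁻¹ + u) / 2) ^ 2) with hf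
  have hfneg : ∀ u : ZMod p, f (-u) = f u := by
    intro u
    simp only [hf, inv_neg, Prod.mk.injEq]
    constructor <;> ring
  set S : Finset (ZMod p) := Finset.univ.filter (fun u => u ≠ 0) with hS
  set T : Finset (ZMod p × ZMod p) := Finset.univ.filter (fun ab => IsTarget n p ab.1 ab.2) with hT
  have htau : tau n p = T.card := by
    rw [tau, show {ab : ZMod p × ZMod p | IsTarget n p ab.1 ab.2} = ↑T by
      ext ab; simp [hT], Set.ncard_coe_finset]
  have hmaps : ∀ u ∈ S, f u ∈ T := by
    intro u hu
    simp only [hS, Finset.mem_filter, Finset.mem_univ, true_and] at hu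
    simp only [hT, Finset.mem_filter, Finset.mem_univ, true_and]
    refine ⟨⟨((n : ZMod p) * u⁻¹ - u) / 2,
        by first | (simp only [hf]; ring) | ring⟩,
      ⟨((n : ZMod p) * u⁻¹ + u) / 2,
        by first | (simp only [hf]; ring) | ring⟩, ?_⟩
    first
    | (simp only [hf]; field_simp; ring)
    | (field_simp; ring)
  -- membership of the explicit preimages
  have hmem : ∀ x y : ZMod p, (n : ZMod p) = y * y - x * x →
      f (y - x) = (x * x, y * y) ∧ f (y + x) = (x * x, y * y) := by
    intro x y hxy
    have hd1 : y - x ≠ 0 := fun hz => hn0 (by linear_combination hxy + (y + x) * hz)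
    have hd2 : y + x ≠ 0 := fun hz => hn0 (by linear_combination hxy + (y - x) * hz)
    constructor
    · have hinv : (n : ZMod p) * (y - x)⁻¹ = y + x := by
        rw [mul_inv_eq_iff_eq_mul₀ hd1]
        linear_combination hxy
      simp only [hf, hinv, Prod.mk.injEq]
      constructor <;> (field_simp; ring)
    · have hinv : (n : ZMod p) * (y + x)⁻¹ = y - x := by
        rw [mul_inv_eq_iff_eq_mul₀ hd2]
        linear_combination hxy
      simp only [hf, hinv, Prod.mk.injEq]
      constructor <;> (field_simp; ring)
  have hcancel : ∀ a : ZMod p, 2 * a = 0 → a = 0 :=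
    fun a ha => (mul_eq_zero.mp ha).resolve_left h2
  -- fiber size lower bounds
  have hfiber : ∀ t ∈ T, (if t.1 = 0 ∨ t.2 = 0 then 2 else 4)
      ≤ (S.filter (fun u => f u = t)).card := by
    intro t ht
    simp only [hT, Finset.mem_filter, Finset.mem_univ, true_and] at ht
    obtain ⟨⟨x, hx⟩, ⟨y, hy⟩, hsum⟩ := ht
    have hxy : (n : ZMod p) = y * y - x * x := by
      rw [hx] at hsum; rw [hy] at hsum; linear_combination hsum
    have hd1 : y - x ≠ 0 := fun hz => hn0 (by linear_combination hxy + (y + x) * hz)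
    have hd2 : y + x ≠ 0 := fun hz => hn0 (by linear_combination hxy + (y - x) * hz)
    have hteq : (x * x, y * y) = t := Prod.ext hx.symm hy.symm
    obtain ⟨hf1, hf2⟩ := hmem x y hxy
    have hm1 : y - x ∈ S.filter (fun u => f u = t) := by
      simp only [hS, Finset.mem_filter, Finset.mem_univ, true_and]
      exact ⟨hd1, hf1.trans hteq⟩
    have hm2 : x - y ∈ S.filter (fun u => f u = t) := by
      simp only [hS, Finset.mem_filter, Finset.mem_univ, true_and]
      refine ⟨fun hz => hd1 (by linear_combination -hz), ?_⟩
      rw [show x - y = -(y - x) by ring, hfneg]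
      exact hf1.trans hteq
    have e1 : y - x ≠ x - y := fun hq => hd1 (hcancel _ (by linear_combination hq))
    by_cases hdeg : t.1 = 0 ∨ t.2 = 0
    · rw [if_pos hdeg]
      have hsub : ({y - x, x - y} : Finset (ZMod p)) ⊆ S.filter (fun u => f u = t) := by
        intro u hu
        simp only [Finset.mem_insert, Finset.mem_singleton] at hu
        rcases hu with rfl | rfl
        · exact hm1
        · exact hm2
      have hc : ({y - x, x - y} : Finset (ZMod p)).card = 2 := by
        rw [Finset.card_insert_of_notMem (by simpa using e1), Finset.card_singleton]
      calc 2 = ({y - x, x - y} : Finset (ZMod p)).card := hc.symm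
        _ ≤ _ := Finset.card_le_card hsub
    · push_neg at hdeg
      have hx0 : x ≠ 0 := fun hz => hdeg.1 (by rw [hx, hz, mul_zero])
      have hy0 : y ≠ 0 := fun hz => hdeg.2 (by rw [hy, hz, mul_zero])
      have hm3 : y + x ∈ S.filter (fun u => f u = t) := by
        simp only [hS, Finset.mem_filter, Finset.mem_univ, true_and]
        exact ⟨hd2, hf2.trans hteq⟩
      have hm4 : -(y + x) ∈ S.filter (fun u => f u = t) := by
        simp only [hS, Finset.mem_filter, Finset.mem_univ, true_and]
        refine ⟨fun hz => hd2 (by linear_combination -hz), ?_⟩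
        rw [hfneg]
        exact hf2.trans hteq
      have e2 : y - x ≠ y + x := fun hq => hx0 (hcancel _ (by linear_combination -hq))
      have e3 : y - x ≠ -(y + x) := fun hq => hy0 (hcancel _ (by linear_combination hq))
      have e4 : x - y ≠ y + x := fun hq => hy0 (hcancel _ (by linear_combination -hq))
      have e5 : x - y ≠ -(y + x) := fun hq => hx0 (hcancel _ (by linear_combination hq))
      have e6 : y + x ≠ -(y + x) := fun hq => hd2 (hcancel _ (by linear_combination hq))
      have hsub : ({y - x, x - y, y + x, -(y + x)} : Finset (ZMod p))
          ⊆ S.filter (fun u => f u = t) := by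
        intro u hu
        simp only [Finset.mem_insert, Finset.mem_singleton] at hu
        rcases hu with rfl | rfl | rfl | rfl
        · exact hm1
        · exact hm2
        · exact hm3
        · exact hm4
      have hc : ({y - x, x - y, y + x, -(y + x)} : Finset (ZMod p)).card = 4 := by
        rw [Finset.card_insert_of_notMem (by
            simp only [Finset.mem_insert, Finset.mem_singleton]
            push_neg
            exact ⟨e1, e2, e3⟩),
          Finset.card_insert_of_notMem (by
            simp only [Finset.mem_insert, Finset.mem_singleton]
            push_neg
            exact ⟨e4, e5⟩),
          Finset.card_insert_of_notMem (by simpa using e6), Finset.card_singleton]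
      rw [if_neg (by push_neg; exact hdeg)]
      calc 4 = ({y - x, x - y, y + x, -(y + x)} : Finset (ZMod p)).card := hc.symm
        _ ≤ _ := Finset.card_le_card hsub
  -- counting
  set D : Finset (ZMod p × ZMod p) := T.filter (fun t => t.1 = 0 ∨ t.2 = 0) with hDdef
  set E : Finset (ZMod p × ZMod p) := T.filter (fun t => ¬(t.1 = 0 ∨ t.2 = 0)) with hEdef
  have hcard : S.card = ∑ t ∈ T, (S.filter fun u => f u = t).card :=
    Finset.card_eq_sum_card_fiberwise hmaps
  have hge : ∑ t ∈ T, (if t.1 = 0 ∨ t.2 = 0 then 2 else 4)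
      ≤ ∑ t ∈ T, (S.filter fun u => f u = t).card :=
    Finset.sum_le_sum hfiber
  have hsplit : ∑ t ∈ T, (if t.1 = 0 ∨ t.2 = 0 then 2 else 4)
      = 2 * D.card + 4 * E.card := by
    rw [Finset.sum_ite, Finset.sum_const, Finset.sum_const, hDdef, hEdef]
    simp [mul_comm]
  have hDT : D.card + E.card = T.card := by
    rw [hDdef, hEdef]
    exact Finset.card_filter_add_card_filter_not _
  have hD1 : D.card ≤ 1 := by
    rw [Finset.card_le_one]
    have key : ∀ t ∈ D, (t = ((0 : ZMod p), ((n : ℤ) : ZMod p)) ∧ IsSquare ((n : ZMod p)))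
        ∨ (t = (-((n : ℤ) : ZMod p), 0) ∧ IsSquare (-(n : ZMod p))) := by
      intro t ht
      simp only [hDdef, hT, Finset.mem_filter, Finset.mem_univ, true_and] at ht
      obtain ⟨⟨hsq1, hsq2, hsum⟩, hdeg⟩ := ht
      rcases hdeg with h0 | h0
      · left
        have h2eq : t.2 = ((n : ℤ) : ZMod p) := by rw [← hsum, h0, add_zero]
        exact ⟨Prod.ext h0 h2eq, h2eq ▸ hsq2⟩
      · right
        have h1eq : t.1 = -((n : ℤ) : ZMod p) := by
          rw [h0] at hsum; linear_combination hsum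
        exact ⟨Prod.ext h1eq h0, h1eq ▸ hsq1⟩
    intro a ha b hb
    rcases key a ha with ⟨ea, sa⟩ | ⟨ea, sa⟩ <;> rcases key b hb with ⟨eb, sb⟩ | ⟨eb, sb⟩
    · rw [ea, eb]
    · exact absurd ⟨sa, sb⟩ hboth
    · exact absurd ⟨sb, sa⟩ hboth
    · rw [ea, eb]
  have hScard : S.card = p - 1 := by
    have hSerase : S = Finset.univ.erase (0 : ZMod p) := by
      ext u; simp [hS]
    rw [hSerase, Finset.card_erase_of_mem (Finset.mem_univ 0), Finset.card_univ, ZMod.card]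
  have hp3 : 3 ≤ p := by
    have := hp.two_le
    rcases Nat.lt_or_ge p 3 with hlt | hge'
    · interval_cases p
      · exact absurd rfl hodd
    · exact hge'
  have hmain : 4 * T.card ≤ p + 1 := by
    have h1 : 2 * D.card + 4 * E.card ≤ p - 1 := by
      calc 2 * D.card + 4 * E.card
          = ∑ t ∈ T, (if t.1 = 0 ∨ t.2 = 0 then 2 else 4) := hsplit.symm
        _ ≤ ∑ t ∈ T, (S.filter fun u => f u = t).card := hge
        _ = S.card := hcard.symm
        _ = p - 1 := hScard
    omega
  rw [htau, Int.le_ediv_iff_mul_le (by norm_num : (0:ℤ) < 4)]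
  have : (4 * T.card : ℤ) ≤ (p : ℤ) + 1 := by exact_mod_cast hmain
  linarith
end

section
/- Let p be an odd prime and n an integer with p ∤ n. Then τ(n,p) − (1 + (n/p))/2 ≤ (p+1)/4, where (n/p) denotes the Legendre symbol. -/
open Finset

section aux
variable {F : Type*} [Field F] [Fintype F] [DecidableEq F]

lemma jacobi_aux (hF : ringChar F ≠ 2) {n : F} (hn : n ≠ 0) :
    ∑ a : F, quadraticChar F a * quadraticChar F (a + n) = -1 := by
  have h0 : ∑ a ∈ univ.erase (0 : F), quadraticChar F a * quadraticChar F (a + n)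
      = ∑ a : F, quadraticChar F a * quadraticChar F (a + n) :=
    Finset.sum_erase _ (by simp)
  rw [← h0]
  have h1 : ∀ a ∈ univ.erase (0 : F),
      quadraticChar F a * quadraticChar F (a + n) = quadraticChar F (1 + n * a⁻¹) := by
    intro a ha
    have ha' : a ≠ 0 := (Finset.mem_erase.mp ha).1
    have : a * (a + n) = a ^ 2 * (1 + n * a⁻¹) := by field_simp
    rw [← map_mul, this, map_mul, quadraticChar_sq_one' ha', one_mul]
  rw [Finset.sum_congr rfl h1]
  have h2 : ∑ a ∈ univ.erase (0 : F), quadraticChar F (1 + n * a⁻¹)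
      = ∑ t ∈ univ.erase (1 : F), quadraticChar F t := by
    apply Finset.sum_nbij' (fun a => 1 + n * a⁻¹) (fun t => n * (t - 1)⁻¹)
    · intro a ha
      have ha' : a ≠ 0 := (Finset.mem_erase.mp ha).1
      simp only [Finset.mem_erase, Finset.mem_univ, and_true]
      intro h
      have : n * a⁻¹ = 0 := by linear_combination h
      simp [ha', hn] at this
    · intro t ht
      have ht' : t ≠ 1 := (Finset.mem_erase.mp ht).1
      simp only [Finset.mem_erase, Finset.mem_univ, and_true]
      intro h
      rcases mul_eq_zero.mp h with h | h
      · exact hn h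
      · exact ht' (sub_eq_zero.mp (inv_eq_zero.mp h))
    · intro a ha
      have ha' : a ≠ 0 := (Finset.mem_erase.mp ha).1
      field_simp
      simp [hn]
    · intro t ht
      have ht' : t ≠ 1 := (Finset.mem_erase.mp ht).1
      have h1 : t - 1 ≠ 0 := sub_ne_zero.mpr ht'
      field_simp
      ring
    · intro a ha; rfl
  rw [h2, Finset.sum_erase_eq_sub (Finset.mem_univ _), quadraticChar_sum_zero hF, map_one]
  ring

lemma ind_aux (a : F) :
    (2 : ℤ) * (if IsSquare a then 1 else 0)
      = 1 + quadraticChar F a + (if a = 0 then 1 else 0) := by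
  by_cases h0 : a = 0
  · simp [h0]
  · by_cases hs : IsSquare a
    · rw [if_pos hs, if_neg h0, (quadraticChar_one_iff_isSquare h0).mpr hs]; ring
    · rw [if_neg hs, if_neg h0, quadraticChar_neg_one_iff_not_isSquare.mpr hs]; ring

lemma count_eq (hF : ringChar F ≠ 2) {n : F} (hn : n ≠ 0)
    [DecidablePred (fun a : F => IsSquare a ∧ IsSquare (n + a))] :
    4 * ((univ.filter fun a : F => IsSquare a ∧ IsSquare (n + a)).card : ℤ)
      = Fintype.card F + 1 + quadraticChar F n + quadraticChar F (-n) := by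
  have key : 4 * ((univ.filter fun a : F => IsSquare a ∧ IsSquare (n + a)).card : ℤ)
      = ∑ a : F, (1 + quadraticChar F a + (if a = 0 then 1 else 0))
          * (1 + quadraticChar F (n + a) + (if a = -n then 1 else 0)) := by
    rw [Finset.card_filter]
    push_cast
    rw [Finset.mul_sum]
    apply Finset.sum_congr rfl
    intro a _
    have h3 : (if (n + a : F) = 0 then (1:ℤ) else 0) = (if a = -n then 1 else 0) := by
      by_cases h : a = -n
      · simp [h]
      · rw [if_neg h, if_neg (fun hc => h (by linear_combination hc))]
    have h1 := ind_aux (F := F) a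
    have h2 : (2 : ℤ) * (if IsSquare (n + a) then 1 else 0)
        = 1 + quadraticChar F (n + a) + (if a = -n then 1 else 0) := by
      rw [ind_aux, h3]
    have h4 : (if IsSquare a ∧ IsSquare (n + a) then (1:ℤ) else 0)
        = (if IsSquare a then 1 else 0) * (if IsSquare (n + a) then 1 else 0) := by
      by_cases hP : IsSquare a <;> by_cases hQ : IsSquare (n + a) <;> simp [hP, hQ]
    rw [← h1, ← h2, h4]; ring
  rw [key]
  have e1 : ∑ a : F, quadraticChar F a = 0 := quadraticChar_sum_zero hF
  have e2 : ∑ a : F, quadraticChar F (n + a) = 0 :=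
    (Fintype.sum_equiv (Equiv.addLeft n) _ _ fun a => rfl).trans e1
  have e3 : ∑ a : F, quadraticChar F a * quadraticChar F (n + a) = -1 := by
    have := jacobi_aux hF hn
    simp only [add_comm] at this ⊢
    convert this using 2
  simp only [add_mul, mul_add, one_mul, mul_one, Finset.sum_add_distrib, mul_ite, ite_mul,
    mul_zero, zero_mul, mul_one, one_mul, Finset.sum_ite_eq', Finset.mem_univ, if_true,
    Finset.sum_const, card_univ, nsmul_eq_mul, mul_one, e1, e2, e3]
  simp only [neg_eq_zero, if_neg hn, add_zero]
  ring
end aux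

theorem stmt_16 (p : ℕ) [Fact p.Prime] (hodd : p ≠ 2) (n : ℤ)
    (hn : ¬ (p : ℤ) ∣ n) :
    (tau n p : ℤ) - (1 + legendreSym p n) / 2 ≤ ((p : ℤ) + 1) / 4 := by
  classical
  haveI : NeZero p := ⟨(Fact.out : p.Prime).ne_zero⟩
  have hchar : ringChar (ZMod p) ≠ 2 := by
    rw [ZMod.ringChar_zmod_n]; exact hodd
  have hn0 : (n : ZMod p) ≠ 0 := by
    rwa [Ne, ZMod.intCast_zmod_eq_zero_iff_dvd]
  have htau : tau n p
      = ({a : ZMod p | IsSquare a ∧ IsSquare ((n : ZMod p) + a)}).ncard := by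
    unfold tau
    have hset : {ab : ZMod p × ZMod p | IsTarget n p ab.1 ab.2}
        = (fun a : ZMod p => (a, (n : ZMod p) + a)) ''
            {a : ZMod p | IsSquare a ∧ IsSquare ((n : ZMod p) + a)} := by
      ext ⟨a, b⟩
      simp only [Set.mem_setOf_eq, Set.mem_image, IsTarget, Prod.mk.injEq]
      constructor
      · rintro ⟨h1, h2, h3⟩; exact ⟨a, ⟨h1, h3 ▸ h2⟩, rfl, h3⟩
      · rintro ⟨x, ⟨h1, h2⟩, rfl, rfl⟩; exact ⟨h1, h2, rfl⟩
    rw [hset, Set.ncard_image_of_injective]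
    intro x y h
    exact (Prod.mk.injEq _ _ _ _ ▸ h : _ ∧ _).1
  have hfin : ({a : ZMod p | IsSquare a ∧ IsSquare ((n : ZMod p) + a)}).ncard
      = (univ.filter fun a : ZMod p => IsSquare a ∧ IsSquare ((n : ZMod p) + a)).card := by
    rw [Set.ncard_eq_toFinset_card']
    congr 1
    ext a
    simp [Set.mem_toFinset]
  have hcount := count_eq hchar hn0
  rw [ZMod.card] at hcount
  have hleg : legendreSym p n = quadraticChar (ZMod p) (n : ZMod p) := rfl
  have h4 : 4 * (tau n p : ℤ)
      = p + 1 + quadraticChar (ZMod p) (n : ZMod p)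
        + quadraticChar (ZMod p) (-(n : ZMod p)) := by
    rw [htau, hfin]; exact hcount
  have hε := quadraticChar_dichotomy hn0
  have hη := quadraticChar_dichotomy (neg_ne_zero.mpr hn0)
  rw [hleg, Int.le_ediv_iff_mul_le (by norm_num : (0:ℤ) < 4)]
  rcases hε with h | h <;> rcases hη with h' | h' <;>
    rw [h] at h4 ⊢ <;> rw [h'] at h4 <;> omega
end
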